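/- arXiv:2103.11992 — 4 statements merged into one kernel-verified Lean document; each statement's English description precedes it below -/
import Mathlib

section
/- For every integer h ≥ 0, there is no graph Γ with vertex set V = ℤ × {0, 1, …, h} isomorphic to the 3-star S_3 such that Orb_ℤ(Γ) = {Γ + d : d ∈ ℤ} is a factorization of the complete graph K_V into 3-stars. -/
/-- The `k`-star `S_k`: the vertex-disjoint union of `k` countable stars, realized
on the vertex set `Fin k × ℕ`, where `(i, 0)` is the center of the `i`-th star. -/
def kStar (k : ℕ) : SimpleGraph (Fin k × ℕ) :=
  SimpleGraph.fromRel (fun a b => a.1 = b.1 ∧ a.2 = 0 ∧ b.2 ≠ 0)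

/-- The graphTranslate `Γ + d` of a graph `Γ` on `ℤ × {0, …, m-1}`: each vertex `(x, i)`
is replaced by `(x + d, i)`. -/
def graphTranslate {m : ℕ} (d : ℤ) (Γ : SimpleGraph (ℤ × Fin m)) : SimpleGraph (ℤ × Fin m) :=
  SimpleGraph.comap (fun p => (p.1 - d, p.2)) Γ

/-- The `ℤ`-orbit `Orb_ℤ(Γ) = {Γ + d : d ∈ ℤ}` of a graph `Γ` on `ℤ × {0, …, m-1}`. -/
def zOrbit {m : ℕ} (Γ : SimpleGraph (ℤ × Fin m)) : Set (SimpleGraph (ℤ × Fin m)) :=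
  {Γ' | ∃ d : ℤ, Γ' = graphTranslate d Γ}

/-- A set `𝒢` of graphs is a factorization of `Λ`: each member is a (spanning)
subgraph of `Λ` and the edge sets of the members partition the edge set of `Λ`. -/
def IsFactorizationSet {V : Type*} (Λ : SimpleGraph V) (𝒢 : Set (SimpleGraph V)) : Prop :=
  (∀ Γ ∈ 𝒢, Γ ≤ Λ) ∧ ∀ e ∈ Λ.edgeSet, ∃! Γ, Γ ∈ 𝒢 ∧ e ∈ Γ.edgeSet

section
variable {h : ℕ} {Γ : SimpleGraph (ℤ × Fin (h+1))}

lemma kStar_adj' {a b : Fin 3 × ℕ} (hab : (kStar 3).Adj a b) :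
    (a.1 = b.1 ∧ a.2 = 0 ∧ b.2 ≠ 0) ∨ (a.1 = b.1 ∧ b.2 = 0 ∧ a.2 ≠ 0) := by
  rw [kStar, SimpleGraph.fromRel_adj] at hab
  tauto

lemma center_not_adj (φ : kStar 3 ≃g Γ) (a b : Fin 3) :
    ¬ Γ.Adj (φ (a,0)) (φ (b,0)) := by
  rw [φ.map_adj_iff]
  intro hab
  rcases kStar_adj' hab with ⟨-, -, hne⟩ | ⟨-, -, hne⟩ <;> exact hne rfl

lemma center_adj_leaf (φ : kStar 3 ≃g Γ) (a : Fin 3) :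
    Γ.Adj (φ (a,0)) (φ (a,1)) := by
  rw [φ.map_adj_iff, kStar, SimpleGraph.fromRel_adj]
  exact ⟨by simp, Or.inl ⟨rfl, rfl, one_ne_zero⟩⟩

lemma edge_endpoint (φ : kStar 3 ≃g Γ) {u v : ℤ × Fin (h+1)} (huv : Γ.Adj u v) :
    (∃ a : Fin 3, u = φ (a,0)) ∨ (∃ a : Fin 3, v = φ (a,0)) := by
  have h1 : Γ.Adj (φ (φ.symm u)) (φ (φ.symm v)) := by simpa using huv
  rcases kStar_adj' (φ.map_adj_iff.mp h1) with ⟨h3, h4, -⟩ | ⟨h3, h4, -⟩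
  · left
    refine ⟨(φ.symm u).1, ?_⟩
    have he : ((φ.symm u).1, (0:ℕ)) = φ.symm u := by rw [← h4]
    rw [he, φ.apply_symm_apply]
  · right
    refine ⟨(φ.symm v).1, ?_⟩
    have he : ((φ.symm v).1, (0:ℕ)) = φ.symm v := by rw [← h4]
    rw [he, φ.apply_symm_apply]

lemma leaf_unique (φ : kStar 3 ≃g Γ) {x y v : ℤ × Fin (h+1)}
    (hx : Γ.Adj x v) (hy : Γ.Adj y v) (hv : ∀ a : Fin 3, v ≠ φ (a,0)) : x = y := by
  have hv2 : (φ.symm v).2 ≠ 0 := by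
    intro h0
    apply hv (φ.symm v).1
    have he : ((φ.symm v).1, (0:ℕ)) = φ.symm v := by rw [← h0]
    rw [he, φ.apply_symm_apply]
  have key : ∀ z, Γ.Adj z v → φ.symm z = ((φ.symm v).1, 0) := by
    intro z hz
    have h1 : Γ.Adj (φ (φ.symm z)) (φ (φ.symm v)) := by simpa using hz
    rcases kStar_adj' (φ.map_adj_iff.mp h1) with ⟨h3, h4, -⟩ | ⟨-, h5, -⟩
    · exact Prod.ext h3 h4
    · exact absurd h5 hv2
  have := (key x hx).trans (key y hy).symm
  exact φ.symm.injective this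

lemma leaf_exists (φ : kStar 3 ≃g Γ) {v : ℤ × Fin (h+1)} (hv : ∀ a : Fin 3, v ≠ φ (a,0)) :
    ∃ a : Fin 3, Γ.Adj (φ (a,0)) v := by
  have hv2 : (φ.symm v).2 ≠ 0 := by
    intro h0
    apply hv (φ.symm v).1
    have he : ((φ.symm v).1, (0:ℕ)) = φ.symm v := by rw [← h0]
    rw [he, φ.apply_symm_apply]
  refine ⟨(φ.symm v).1, ?_⟩
  have hadj : (kStar 3).Adj ((φ.symm v).1, 0) (φ.symm v) := by
    unfold kStar
    rw [SimpleGraph.fromRel_adj]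
    constructor
    · intro he
      exact hv2 (congrArg Prod.snd he).symm
    · exact Or.inl ⟨rfl, rfl, hv2⟩
  have := φ.map_adj_iff.mpr hadj
  simpa using this

lemma st16_translate_translate (d e : ℤ) (Γ : SimpleGraph (ℤ × Fin (h+1))) :
    graphTranslate d (graphTranslate e Γ) = graphTranslate (d + e) Γ := by
  ext ⟨x,i⟩ ⟨y,j⟩
  show Γ.Adj (x - d - e, i) (y - d - e, j) ↔ Γ.Adj (x - (d+e), i) (y - (d+e), j)
  rw [sub_sub, sub_sub]

lemma st16_translate_zero (Γ : SimpleGraph (ℤ × Fin (h+1))) : graphTranslate 0 Γ = Γ := by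
  ext ⟨x,i⟩ ⟨y,j⟩
  show Γ.Adj (x - 0, i) (y - 0, j) ↔ Γ.Adj (x, i) (y, j)
  rw [sub_zero, sub_zero]

lemma fin3_cases : ∀ (a k l m : Fin 3), k ≠ l → k ≠ m → l ≠ m → a = k ∨ a = l ∨ a = m := by
  decide

end

/-- for every `h ≥ 0` there is no graph `Γ` with vertex set
`V = ℤ × {0, 1, …, h}` isomorphic to the `3`-star `S₃` such that
`Orb_ℤ(Γ) = {Γ + d : d ∈ ℤ}` is a factorization of the complete graph `K_V`
into `3`-stars. -/
theorem stmt_16 (h : ℕ) :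
    ¬ ∃ Γ : SimpleGraph (ℤ × Fin (h + 1)), Nonempty (kStar 3 ≃g Γ) ∧
        IsFactorizationSet (⊤ : SimpleGraph (ℤ × Fin (h + 1))) (zOrbit Γ) ∧
          ∀ Γ' ∈ zOrbit Γ, Nonempty (kStar 3 ≃g Γ') := by
  rintro ⟨Γ, ⟨φ⟩, ⟨-, hcov⟩, -⟩
  classical
  -- existence of a covering translate for every pair of distinct vertices
  have cover : ∀ u v : ℤ × Fin (h+1), u ≠ v →
      ∃ d : ℤ, Γ.Adj (u.1 - d, u.2) (v.1 - d, v.2) := by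
    intro u v huv
    obtain ⟨Γ', ⟨hmem, he⟩, -⟩ := hcov s(u,v) (by simpa using huv)
    obtain ⟨d, rfl⟩ := hmem
    exact ⟨d, (SimpleGraph.mem_edgeSet _).mp he⟩
  -- uniqueness of the covering translate (as a graph)
  have coverEq : ∀ (e : Sym2 (ℤ × Fin (h+1))), e ∈ (⊤ : SimpleGraph (ℤ × Fin (h+1))).edgeSet →
      ∀ d₁ d₂ : ℤ, e ∈ (graphTranslate d₁ Γ).edgeSet → e ∈ (graphTranslate d₂ Γ).edgeSet →
      graphTranslate d₁ Γ = graphTranslate d₂ Γ := by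
    intro e he d₁ d₂ h1 h2
    obtain ⟨Γ', -, hu⟩ := hcov e he
    rw [hu _ ⟨⟨d₁, rfl⟩, h1⟩, hu _ ⟨⟨d₂, rfl⟩, h2⟩]
  -- no nontrivial period
  have period : ∀ g : ℤ, g ≠ 0 → Γ = graphTranslate g Γ → False := by
    intro g hg hper
    have hup : ∀ u v : ℤ × Fin (h+1), Γ.Adj u v → Γ.Adj (u.1 - g, u.2) (v.1 - g, v.2) := by
      intro u v huv
      rw [hper] at huv
      exact huv
    have base := center_adj_leaf φ 0
    have iter : ∀ n : ℕ, Γ.Adj ((φ ((0:Fin 3),(0:ℕ))).1 - n*g, (φ ((0:Fin 3),(0:ℕ))).2)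
        ((φ ((0:Fin 3),(1:ℕ))).1 - n*g, (φ ((0:Fin 3),(1:ℕ))).2) := by
      intro n
      induction n with
      | zero => simpa using base
      | succ n ih =>
        have hst := hup _ _ ih
        have e1 : (φ ((0:Fin 3),(0:ℕ))).1 - (n:ℤ)*g - g = (φ ((0:Fin 3),(0:ℕ))).1 - ((n+1 : ℕ):ℤ)*g := by
          push_cast; ring
        have e2 : (φ ((0:Fin 3),(1:ℕ))).1 - (n:ℤ)*g - g = (φ ((0:Fin 3),(1:ℕ))).1 - ((n+1 : ℕ):ℤ)*g := by
          push_cast; ring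
        rw [← e1, ← e2]
        exact hst
    have key : ∀ n : ℕ, ∃ a : Fin 3,
        (φ ((0:Fin 3),(0:ℕ))).1 - n*g = (φ (a,(0:ℕ))).1 ∨
        (φ ((0:Fin 3),(1:ℕ))).1 - n*g = (φ (a,(0:ℕ))).1 := by
      intro n
      rcases edge_endpoint φ (iter n) with ⟨a, ha⟩ | ⟨a, ha⟩
      · exact ⟨a, Or.inl (congrArg Prod.fst ha)⟩
      · exact ⟨a, Or.inr (congrArg Prod.fst ha)⟩
    have hcard : (Finset.univ : Finset (Fin 3 × Fin 2)).card < (Finset.range 7).card := by simp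
    obtain ⟨n, -, n', -, hnn', heq⟩ :=
      Finset.exists_ne_map_eq_of_card_lt_of_maps_to (f := fun n : ℕ =>
        ((key n).choose,
          if (φ ((0:Fin 3),(0:ℕ))).1 - n*g = (φ ((key n).choose,(0:ℕ))).1 then (0:Fin 2) else 1))
        hcard (fun a _ => Finset.mem_univ _)
    have h1 := congrArg Prod.fst heq
    have h2 := congrArg Prod.snd heq
    simp only at h1 h2
    have cancel : ∀ A : ℤ, A - n*g = A - n'*g → False := by
      intro A hA
      have h3 : (n:ℤ) * g = (n':ℤ) * g := by linarith
      exact hnn' (Nat.cast_injective (mul_right_cancel₀ hg h3))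
    by_cases hb : (φ ((0:Fin 3),(0:ℕ))).1 - n*g = (φ ((key n).choose,(0:ℕ))).1
    · by_cases hb' : (φ ((0:Fin 3),(0:ℕ))).1 - n'*g = (φ ((key n').choose,(0:ℕ))).1
      · rw [h1] at hb
        exact cancel _ (hb.trans hb'.symm)
      · rw [if_pos hb, if_neg hb'] at h2
        exact absurd h2 (by decide)
    · by_cases hb' : (φ ((0:Fin 3),(0:ℕ))).1 - n'*g = (φ ((key n').choose,(0:ℕ))).1
      · rw [if_neg hb, if_pos hb'] at h2
        exact absurd h2 (by decide)
      · have k1 := (key n).choose_spec.resolve_left hb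
        have k2 := (key n').choose_spec.resolve_left hb'
        rw [h1] at k1
        exact cancel _ (k1.trans k2.symm)
  -- distinct centers
  have centers_ne : ∀ a b : Fin 3, a ≠ b → φ (a,(0:ℕ)) ≠ φ (b,(0:ℕ)) := by
    intro a b hab hEq
    have := φ.injective hEq
    exact hab (by simpa using congrArg Prod.fst this)
  -- a row containing no center gives an uncoverable edge
  have NOROW : ∀ j : Fin (h+1), (∀ a : Fin 3, (φ (a,(0:ℕ))).2 ≠ j) → False := by
    intro j hj
    obtain ⟨d, hd⟩ := cover ((0:ℤ), j) ((1:ℤ), j) (by simp)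
    rcases edge_endpoint φ hd with ⟨a, ha⟩ | ⟨a, ha⟩ <;>
      exact hj a (congrArg Prod.snd ha).symm
  -- two centers in one row, one center in another row: contradiction
  have B2 : ∀ k l m : Fin 3, k ≠ l →
      (φ (k,(0:ℕ))).2 = (φ (l,(0:ℕ))).2 →
      (φ (m,(0:ℕ))).2 ≠ (φ (k,(0:ℕ))).2 → False := by
    intro k l m hkl hrkl hrm
    have hkm : k ≠ m := fun e => hrm (by rw [e])
    have hlm : l ≠ m := fun e => hrm (by rw [← e, ← hrkl])
    have rowk : ∀ a : Fin 3, (φ (a,(0:ℕ))).2 = (φ (k,(0:ℕ))).2 → a = k ∨ a = l := by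
      intro a hak
      rcases fin3_cases a k l m hkl hkm hlm with rfl | rfl | rfl
      · exact Or.inl rfl
      · exact Or.inr rfl
      · exact absurd hak hrm
    have rowm : ∀ a : Fin 3, (φ (a,(0:ℕ))).2 = (φ (m,(0:ℕ))).2 → a = m := by
      intro a ham
      rcases fin3_cases a k l m hkl hkm hlm with rfl | rfl | rfl
      · exact absurd ham.symm hrm
      · exact absurd (hrkl.trans ham).symm hrm
      · rfl
    have hpq : (φ (k,(0:ℕ))).1 ≠ (φ (l,(0:ℕ))).1 := by
      intro e
      exact centers_ne k l hkl (Prod.ext_iff.mpr ⟨e, hrkl⟩)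
    have step : ∀ k' l' : Fin 3,
        (∀ a : Fin 3, (φ (a,(0:ℕ))).2 = (φ (k',(0:ℕ))).2 → a = k' ∨ a = l') →
        (φ (k',(0:ℕ))).2 = (φ (k,(0:ℕ))).2 →
        Γ.Adj (φ (l',(0:ℕ)))
          ((φ (m,(0:ℕ))).1 - (φ (k',(0:ℕ))).1 + (φ (l',(0:ℕ))).1, (φ (m,(0:ℕ))).2) := by
      intro k' l' hrowpair hk'row
      have hne : φ (k',(0:ℕ)) ≠ φ (m,(0:ℕ)) := by
        intro e
        exact hrm (by rw [← e, hk'row])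
      obtain ⟨d, hd⟩ := cover (φ (k',(0:ℕ))) (φ (m,(0:ℕ))) hne
      rcases edge_endpoint φ hd with ⟨a, ha⟩ | ⟨a, ha⟩
      · have hrowa : (φ (a,(0:ℕ))).2 = (φ (k',(0:ℕ))).2 := (congrArg Prod.snd ha).symm
        rcases hrowpair a hrowa with hak | hal
        · rw [hak] at ha
          have hd0 : d = 0 := by
            have := congrArg Prod.fst ha
            dsimp only at this
            omega
          have : Γ.Adj (φ (k',(0:ℕ))) (φ (m,(0:ℕ))) := by simpa [hd0] using hd
          exact absurd this (center_not_adj φ k' m)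
        · rw [hal] at ha
          have hdv : d = (φ (k',(0:ℕ))).1 - (φ (l',(0:ℕ))).1 := by
            have := congrArg Prod.fst ha
            dsimp only at this
            omega
          rw [ha] at hd
          rw [hdv] at hd
          have e3 : (φ (m,(0:ℕ))).1 - ((φ (k',(0:ℕ))).1 - (φ (l',(0:ℕ))).1)
              = (φ (m,(0:ℕ))).1 - (φ (k',(0:ℕ))).1 + (φ (l',(0:ℕ))).1 := by ring
          rwa [e3] at hd
      · have hrowa : (φ (a,(0:ℕ))).2 = (φ (m,(0:ℕ))).2 := (congrArg Prod.snd ha).symm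
        have ham := rowm a hrowa
        rw [ham] at ha
        have hd0 : d = 0 := by
          have := congrArg Prod.fst ha
          dsimp only at this
          omega
        have : Γ.Adj (φ (k',(0:ℕ))) (φ (m,(0:ℕ))) := by simpa [hd0] using hd
        exact absurd this (center_not_adj φ k' m)
    have hw1 := step k l rowk rfl
    have rowl : ∀ a : Fin 3, (φ (a,(0:ℕ))).2 = (φ (l,(0:ℕ))).2 → a = l ∨ a = k := by
      intro a hal
      rcases rowk a (by rw [hal, ← hrkl]) with hk | hl
      · exact Or.inr hk
      · exact Or.inl hl
    have hw2 := step l k rowl hrkl.symm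
    have hneW : φ (m,(0:ℕ)) ≠
        ((φ (m,(0:ℕ))).1 - (φ (k,(0:ℕ))).1 + (φ (l,(0:ℕ))).1, (φ (m,(0:ℕ))).2) := by
      intro e
      have := congrArg Prod.fst e
      dsimp only at this
      omega
    have hW1notc : ∀ a : Fin 3,
        ((φ (m,(0:ℕ))).1 - (φ (k,(0:ℕ))).1 + (φ (l,(0:ℕ))).1, (φ (m,(0:ℕ))).2) ≠ φ (a,(0:ℕ)) := by
      intro a he
      have hrowa : (φ (a,(0:ℕ))).2 = (φ (m,(0:ℕ))).2 := (congrArg Prod.snd he).symm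
      have ham := rowm a hrowa
      rw [ham] at he
      have := congrArg Prod.fst he
      dsimp only at this
      omega
    have hW2notc : ∀ a : Fin 3,
        ((φ (m,(0:ℕ))).1 - (φ (l,(0:ℕ))).1 + (φ (k,(0:ℕ))).1, (φ (m,(0:ℕ))).2) ≠ φ (a,(0:ℕ)) := by
      intro a he
      have hrowa : (φ (a,(0:ℕ))).2 = (φ (m,(0:ℕ))).2 := (congrArg Prod.snd he).symm
      have ham := rowm a hrowa
      rw [ham] at he
      have := congrArg Prod.fst he
      dsimp only at this
      omega
    obtain ⟨d, hd⟩ := cover (φ (m,(0:ℕ))) _ hneW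
    dsimp only at hd
    rcases edge_endpoint φ hd with ⟨a, ha⟩ | ⟨a, ha⟩
    · have hrowa : (φ (a,(0:ℕ))).2 = (φ (m,(0:ℕ))).2 := (congrArg Prod.snd ha).symm
      have ham := rowm a hrowa
      rw [ham] at ha
      have hd0 : d = 0 := by
        have := congrArg Prod.fst ha
        dsimp only at this
        omega
      have hadjMW : Γ.Adj (φ (m,(0:ℕ)))
          ((φ (m,(0:ℕ))).1 - (φ (k,(0:ℕ))).1 + (φ (l,(0:ℕ))).1, (φ (m,(0:ℕ))).2) := by
        simpa [hd0] using hd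
      have := leaf_unique φ hadjMW hw1 hW1notc
      exact centers_ne m l hlm.symm this
    · have hrowa : (φ (a,(0:ℕ))).2 = (φ (m,(0:ℕ))).2 := (congrArg Prod.snd ha).symm
      have ham := rowm a hrowa
      rw [ham] at ha
      have hdv : d = (φ (l,(0:ℕ))).1 - (φ (k,(0:ℕ))).1 := by
        have := congrArg Prod.fst ha
        dsimp only at this
        omega
      rw [ha, hdv] at hd
      have e3 : (φ (m,(0:ℕ))).1 - ((φ (l,(0:ℕ))).1 - (φ (k,(0:ℕ))).1)
          = (φ (m,(0:ℕ))).1 - (φ (l,(0:ℕ))).1 + (φ (k,(0:ℕ))).1 := by ring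
      rw [e3] at hd
      have := leaf_unique φ hd.symm hw2 hW2notc
      exact centers_ne m k hkm.symm this
  -- all three rows distinct: contradiction
  have B1 : (φ ((0:Fin 3),(0:ℕ))).2 ≠ (φ ((1:Fin 3),(0:ℕ))).2 →
      (φ ((0:Fin 3),(0:ℕ))).2 ≠ (φ ((2:Fin 3),(0:ℕ))).2 →
      (φ ((1:Fin 3),(0:ℕ))).2 ≠ (φ ((2:Fin 3),(0:ℕ))).2 → False := by
    intro e01 e02 e12
    have uniq : ∀ a b : Fin 3, (φ (a,(0:ℕ))).2 = (φ (b,(0:ℕ))).2 → a = b := by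
      intro a b hab
      rcases fin3_cases a 0 1 2 (by decide) (by decide) (by decide) with rfl|rfl|rfl <;>
      rcases fin3_cases b 0 1 2 (by decide) (by decide) (by decide) with rfl|rfl|rfl <;>
        first
          | rfl
          | exact absurd hab e01 | exact absurd hab.symm e01
          | exact absurd hab e02 | exact absurd hab.symm e02
          | exact absurd hab e12 | exact absurd hab.symm e12
    obtain ⟨d, hd⟩ := cover (φ ((0:Fin 3),(0:ℕ))) (φ ((1:Fin 3),(0:ℕ))) (centers_ne 0 1 (by decide))
    rcases edge_endpoint φ hd with ⟨a, ha⟩ | ⟨a, ha⟩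
    · have h0 := uniq a 0 (congrArg Prod.snd ha).symm
      rw [h0] at ha
      have hd0 : d = 0 := by
        have := congrArg Prod.fst ha
        dsimp only at this
        omega
      have : Γ.Adj (φ ((0:Fin 3),(0:ℕ))) (φ ((1:Fin 3),(0:ℕ))) := by simpa [hd0] using hd
      exact center_not_adj φ 0 1 this
    · have h0 := uniq a 1 (congrArg Prod.snd ha).symm
      rw [h0] at ha
      have hd0 : d = 0 := by
        have := congrArg Prod.fst ha
        dsimp only at this
        omega
      have : Γ.Adj (φ ((0:Fin 3),(0:ℕ))) (φ ((1:Fin 3),(0:ℕ))) := by simpa [hd0] using hd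
      exact center_not_adj φ 0 1 this
  -- case analysis on the rows of the three centers
  by_cases e01 : (φ ((0:Fin 3),(0:ℕ))).2 = (φ ((1:Fin 3),(0:ℕ))).2
  · by_cases e02 : (φ ((0:Fin 3),(0:ℕ))).2 = (φ ((2:Fin 3),(0:ℕ))).2
    · -- all three centers in the same row
      by_cases hone : ∀ r : Fin (h+1), r = (φ ((0:Fin 3),(0:ℕ))).2
      · -- counting case
        set r0 : Fin (h+1) := (φ ((0:Fin 3),(0:ℕ))).2 with hr0
        set P : Fin 3 → ℤ := fun a => (φ (a,(0:ℕ))).1 with hP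
        have hcvert : ∀ a : Fin 3, φ (a,(0:ℕ)) = (P a, r0) := by
          intro a
          have h2 : (φ (a,(0:ℕ))).2 = r0 := (hone _).symm ▸ rfl
          rw [← h2]
        have EX : ∀ z : ℤ, (∀ a : Fin 3, z ≠ P a) →
            ∃ a : Fin 3, Γ.Adj (φ (a,(0:ℕ))) (z, r0) := by
          intro z hz
          have hv : ∀ a : Fin 3, ((z, r0) : ℤ × Fin (h+1)) ≠ φ (a,(0:ℕ)) := by
            intro a he
            rw [hcvert a] at he
            exact hz a (by simpa using congrArg Prod.fst he)
          exact leaf_exists φ hv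
        have INJ : ∀ (z z' : ℤ) (a a' : Fin 3),
            (∀ b, z ≠ P b) → (∀ b, z' ≠ P b) →
            Γ.Adj (φ (a,(0:ℕ))) (z, r0) → Γ.Adj (φ (a',(0:ℕ))) (z', r0) →
            |z - P a| = |z' - P a'| → z = z' := by
          intro z z' a a' hz hz' hadj hadj' habs
          have hδpos : 0 < |z - P a| := abs_pos.mpr (sub_ne_zero.mpr (hz a))
          have mkcov : ∀ (w : ℤ) (b : Fin 3), Γ.Adj (φ (b,(0:ℕ))) (w, r0) →
              |w - P b| = |z - P a| →
              s((((0:ℤ), r0) : ℤ × Fin (h+1)), ((|z - P a| : ℤ), r0)) ∈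
                (graphTranslate (-(min w (P b))) Γ).edgeSet := by
            intro w b hadjw habsw
            rw [SimpleGraph.mem_edgeSet]
            show Γ.Adj ((0:ℤ) - -(min w (P b)), r0) (|z - P a| - -(min w (P b)), r0)
            rcases abs_cases (w - P b) with ⟨he, hge⟩ | ⟨he, hlt⟩
            · have hδ : |z - P a| = w - P b := by rw [← habsw, he]
              have hmin : min w (P b) = P b := min_eq_right (by linarith)
              have h1 : (0:ℤ) - -(min w (P b)) = P b := by rw [hmin]; ring
              have h2 : |z - P a| - -(min w (P b)) = w := by rw [hδ, hmin]; ring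
              rw [h1, h2, ← hcvert b]
              exact hadjw
            · have hδ : |z - P a| = P b - w := by rw [← habsw, he]; ring
              have hmin : min w (P b) = w := min_eq_left (by linarith)
              have h1 : (0:ℤ) - -(min w (P b)) = w := by rw [hmin]; ring
              have h2 : |z - P a| - -(min w (P b)) = P b := by rw [hδ, hmin]; ring
              rw [h1, h2, ← hcvert b]
              exact hadjw.symm
          have hedge : s((((0:ℤ), r0) : ℤ × Fin (h+1)), ((|z - P a| : ℤ), r0)) ∈
              (⊤ : SimpleGraph (ℤ × Fin (h+1))).edgeSet := by
            rw [SimpleGraph.mem_edgeSet, SimpleGraph.top_adj]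
            intro hEq
            rw [Prod.mk.injEq] at hEq
            exact (ne_of_gt hδpos) hEq.1.symm
          have c1 := mkcov z a hadj rfl
          have c2 := mkcov z' a' hadj' habs.symm
          have geq := coverEq _ hedge _ _ c1 c2
          by_cases hdd : min z (P a) = min z' (P a')
          · have hza' := hz a'
            have hz'a := hz' a
            rcases abs_cases (z - P a) with ⟨he1, hs1⟩ | ⟨he1, hs1⟩ <;>
              rcases abs_cases (z' - P a') with ⟨he2, hs2⟩ | ⟨he2, hs2⟩ <;>
              rw [he1, he2] at habs <;>
              rcases min_cases z (P a) with ⟨hm1, hm2⟩ | ⟨hm1, hm2⟩ <;>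
              rcases min_cases z' (P a') with ⟨hm1', hm2'⟩ | ⟨hm1', hm2'⟩ <;>
              omega
          · exfalso
            have h0 := congrArg (graphTranslate (min z (P a))) geq
            rw [st16_translate_translate, st16_translate_translate] at h0
            have e4 : min z (P a) + -(min z (P a)) = 0 := by ring
            rw [e4, st16_translate_zero] at h0
            exact period _ (fun hc => hdd (by linarith)) h0
        set K : ℤ := |P 0| + |P 1| + |P 2| with hK
        have habs0 := abs_nonneg (P 0)
        have habs1 := abs_nonneg (P 1)
        have habs2 := abs_nonneg (P 2)
        have hK0 : 0 ≤ K := by rw [hK]; linarith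
        have hPbound : ∀ a : Fin 3, |P a| ≤ K := by
          intro a
          rcases fin3_cases a 0 1 2 (by decide) (by decide) (by decide) with rfl|rfl|rfl <;>
            (rw [hK]; linarith)
        set N : ℤ := K + 3 with hN
        have hSmem : ∀ z : ℤ, z ∈ (Finset.Icc (-N) N) \ ({P 0, P 1, P 2} : Finset ℤ) →
            ∀ b : Fin 3, z ≠ P b := by
          intro z hzS b
          rw [Finset.mem_sdiff] at hzS
          intro he
          apply hzS.2
          rcases fin3_cases b 0 1 2 (by decide) (by decide) (by decide) with rfl|rfl|rfl <;>
            (rw [he]; simp)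
        set f : ℤ → ℤ := fun z =>
          if hz : ∃ a : Fin 3, Γ.Adj (φ (a,(0:ℕ))) (z, r0) then |z - P hz.choose| else 0 with hfdef
        have hfspec : ∀ z : ℤ, (∀ b : Fin 3, z ≠ P b) →
            ∃ a : Fin 3, Γ.Adj (φ (a,(0:ℕ))) (z, r0) ∧ f z = |z - P a| := by
          intro z hzn
          have hex := EX z hzn
          refine ⟨hex.choose, hex.choose_spec, ?_⟩
          simp only [hfdef]
          exact dif_pos hex
        have hmaps : ∀ z ∈ (Finset.Icc (-N) N) \ ({P 0, P 1, P 2} : Finset ℤ),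
            f z ∈ Finset.Icc (1:ℤ) (N + K) := by
          intro z hzS
          obtain ⟨a, hadj, hfz⟩ := hfspec z (hSmem z hzS)
          rw [hfz, Finset.mem_Icc]
          constructor
          · have hne : z - P a ≠ 0 := sub_ne_zero.mpr (hSmem z hzS a)
            rcases abs_cases (z - P a) with ⟨he, hs⟩ | ⟨he, hs⟩ <;> rw [he] <;> omega
          · have h1 : |z| ≤ N := by
              rw [Finset.mem_sdiff, Finset.mem_Icc] at hzS
              exact abs_le.mpr ⟨hzS.1.1, hzS.1.2⟩
            have h2 := hPbound a
            have h3 : |z - P a| ≤ |z| + |P a| := by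
              calc |z - P a| = |z + -P a| := by rw [sub_eq_add_neg]
                _ ≤ |z| + |-P a| := abs_add_le _ _
                _ = |z| + |P a| := by rw [abs_neg]
            linarith
        have hinj : Set.InjOn f ↑((Finset.Icc (-N) N) \ ({P 0, P 1, P 2} : Finset ℤ)) := by
          intro z hzS z' hzS' hff
          have hzS := Finset.mem_coe.mp hzS
          have hzS' := Finset.mem_coe.mp hzS'
          obtain ⟨a, hadj, hfz⟩ := hfspec z (hSmem z hzS)
          obtain ⟨a', hadj', hfz'⟩ := hfspec z' (hSmem z' hzS')
          exact INJ z z' a a' (hSmem z hzS) (hSmem z' hzS') hadj hadj'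
            (by rw [← hfz, ← hfz', hff])
        have hcard := Finset.card_le_card_of_injOn f hmaps hinj
        have hc1 : (Finset.Icc (-N) N).card = (2*N+1).toNat := by
          rw [Int.card_Icc]
          congr 1
          ring
        have hc2 : (Finset.Icc (1:ℤ) (N + K)).card = (N + K).toNat := by
          rw [Int.card_Icc]
          congr 1
          ring
        have t1 := Finset.card_insert_le (P 0) ({P 1, P 2} : Finset ℤ)
        have t2 := Finset.card_insert_le (P 1) ({P 2} : Finset ℤ)
        have t3 : ({P 2} : Finset ℤ).card = 1 := Finset.card_singleton _
        have hc4 := Finset.le_card_sdiff ({P 0, P 1, P 2} : Finset ℤ) (Finset.Icc (-N) N)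
        omega
      · push_neg at hone
        obtain ⟨j, hj⟩ := hone
        refine NOROW j ?_
        intro a
        rcases fin3_cases a 0 1 2 (by decide) (by decide) (by decide) with rfl|rfl|rfl
        · exact fun e => hj e.symm
        · exact fun e => hj (e01.trans e).symm
        · exact fun e => hj (e02.trans e).symm
    · exact B2 0 1 2 (by decide) e01 (fun e => e02 e.symm)
  · by_cases e02 : (φ ((0:Fin 3),(0:ℕ))).2 = (φ ((2:Fin 3),(0:ℕ))).2
    · exact B2 0 2 1 (by decide) e02 (fun e => e01 e.symm)
    · by_cases e12 : (φ ((1:Fin 3),(0:ℕ))).2 = (φ ((2:Fin 3),(0:ℕ))).2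
      · exact B2 1 2 0 (by decide) e12 e01
      · exact B1 e01 e02 e12
end

section
/- Let ℵ be an infinite cardinal and let F = {F_α : α ∈ A} be a family of non-empty graphs, each of order at most ℵ, with |A| = ℵ. For each α ∈ A choose a cardinal ℵ_α as follows: ℵ_α = ℵ whenever the domination number of F_α is less than ℵ, and ℵ_α is an arbitrary cardinal with 0 ≤ ℵ_α ≤ ℵ otherwise. Then there exists a decomposition G = {Γ_α : α ∈ A} of the complete graph K_ℵ such that each Γ_α is isomorphic to F_α and |V(K_ℵ) \ V(Γ_α)| = ℵ_α for every α ∈ A. -/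
universe u

/-- A set `D` of vertices is dominating if every vertex not in `D` is adjacent to
some vertex of `D`. -/
def IsDominatingSet {V : Type*} (F : SimpleGraph V) (D : Set V) : Prop :=
  ∀ v ∉ D, ∃ d ∈ D, F.Adj v d

/-- An indexed family `G` of subgraphs of `Λ` is a decomposition of `Λ`: the edge
sets of the `G a` partition the edge set of `Λ`. -/
def IsDecomposition {A V : Type*} {Λ : SimpleGraph V} (G : A → Λ.Subgraph) : Prop :=
  ∀ e ∈ Λ.edgeSet, ∃! a, e ∈ (G a).edgeSet

namespace Stmt17

variable {A X : Type u} {V : A → Type u}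

/-- The state of the construction: a set of triples `(a, u, x)` recording that
vertex `u` of `F a` has been mapped to `x`. -/
abbrev St (A : Type u) (V : A → Type u) (X : Type u) : Type u := Set (Σ a : A, V a × X)

variable (F : ∀ a, SimpleGraph (V a)) (H : A → Set X)

def dm (st : St A V X) (a : A) : Set (V a) := {u | ∃ x, (⟨a, (u, x)⟩ : Σ a, V a × X) ∈ st}
def rg (st : St A V X) (a : A) : Set X := {x | ∃ u, (⟨a, (u, x)⟩ : Σ a, V a × X) ∈ st}
def tch (st : St A V X) : Set X := {x | ∃ a u, (⟨a, (u, x)⟩ : Σ a, V a × X) ∈ st}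
def imgE (st : St A V X) (a : A) : Set (Sym2 X) :=
  {e | ∃ u w x y, (F a).Adj u w ∧ (⟨a, (u, x)⟩ : Σ a, V a × X) ∈ st ∧
    (⟨a, (w, y)⟩ : Σ a, V a × X) ∈ st ∧ e = s(x, y)}
def cov (st : St A V X) : Set (Sym2 X) := ⋃ a, imgE F st a
def unused (st : St A V X) (a : A) : Prop := ∀ p : V a × X, (⟨a, p⟩ : Σ a, V a × X) ∉ st

structure Good (st : St A V X) : Prop where
  func : ∀ ⦃a : A⦄ ⦃u : V a⦄ ⦃x x' : X⦄, (⟨a, (u, x)⟩ : Σ a, V a × X) ∈ st →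
    (⟨a, (u, x')⟩ : Σ a, V a × X) ∈ st → x = x'
  inj : ∀ ⦃a : A⦄ ⦃u u' : V a⦄ ⦃x : X⦄, (⟨a, (u, x)⟩ : Σ a, V a × X) ∈ st →
    (⟨a, (u', x)⟩ : Σ a, V a × X) ∈ st → u = u'
  avoid : ∀ ⦃a : A⦄ ⦃u : V a⦄ ⦃x : X⦄, (⟨a, (u, x)⟩ : Σ a, V a × X) ∈ st → x ∉ H a
  disj : ∀ ⦃a b : A⦄ ⦃e : Sym2 X⦄, e ∈ imgE F st a → e ∈ imgE F st b → a = b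

inductive Task (A : Type u) (V : A → Type u) (X : Type u) : Type u
  | cover (x y : X)
  | span (a : A) (x : X)
  | tot (a : A) (u : V a)

variable (u₀ w₀ : ∀ a, V a)

open Classical in
noncomputable def step (st : St A V X) : Task A V X → St A V X
  | .cover x y =>
    if h : x ≠ y ∧ s(x, y) ∉ cov F st ∧ ∃ a, unused st a ∧ x ∉ H a ∧ y ∉ H a then
      insert ⟨h.2.2.choose, (u₀ h.2.2.choose, x)⟩
        (insert ⟨h.2.2.choose, (w₀ h.2.2.choose, y)⟩ st)
    else st
  | .span a x =>
    if h : x ∉ rg st a ∧ x ∉ H a ∧ ∃ u, u ∉ dm st a ∧ ∀ w ∈ dm st a, ¬ (F a).Adj u w then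
      insert ⟨a, (h.2.2.choose, x)⟩ st
    else st
  | .tot a u =>
    if h : u ∉ dm st a ∧ ∃ y, y ∉ tch st ∧ y ∉ H a then
      insert ⟨a, (u, h.2.choose)⟩ st
    else st

theorem subset_step (st : St A V X) (t : Task A V X) : st ⊆ step F H u₀ w₀ st t := by
  cases t <;> simp only [step] <;> split <;> intro p hp <;>
    simp [Set.mem_insert_iff, hp]

theorem step_cases (st : St A V X) (t : Task A V X) :
    step F H u₀ w₀ st t = st ∨ (∃ p, step F H u₀ w₀ st t = insert p st) ∨
      ∃ p q, step F H u₀ w₀ st t = insert p (insert q st) := by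
  cases t <;> simp only [step] <;> split
  · exact Or.inr (Or.inr ⟨_, _, rfl⟩)
  · exact Or.inl rfl
  · exact Or.inr (Or.inl ⟨_, rfl⟩)
  · exact Or.inl rfl
  · exact Or.inr (Or.inl ⟨_, rfl⟩)
  · exact Or.inl rfl

theorem step_diff_le_two (st : St A V X) (t : Task A V X) :
    Cardinal.mk ↥(step F H u₀ w₀ st t \ st) ≤ 2 := by
  have key : ∀ (p q : Σ a : A, V a × X), step F H u₀ w₀ st t ⊆ insert p (insert q st) →
      Cardinal.mk ↥(step F H u₀ w₀ st t \ st) ≤ 2 := by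
    intro p q hsub
    have hss : (step F H u₀ w₀ st t \ st) ⊆ {p, q} := by
      intro z hz
      rcases hsub hz.1 with h | h | h
      · exact Or.inl h
      · exact Or.inr h
      · exact absurd h hz.2
    calc Cardinal.mk ↥(step F H u₀ w₀ st t \ st) ≤ Cardinal.mk ↥({p, q} : Set _) :=
          Cardinal.mk_le_mk_of_subset hss
      _ ≤ Cardinal.mk ↥({q} : Set _) + 1 := Cardinal.mk_insert_le
      _ ≤ 1 + 1 := by rw [Cardinal.mk_singleton]
      _ = 2 := one_add_one_eq_two
  rcases step_cases F H u₀ w₀ st t with h | ⟨p, h⟩ | ⟨p, q, h⟩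
  · rw [h]; simp
  · exact key p p (by rw [h]; intro z hz; rcases hz with h' | h' <;> simp [h'])
  · exact key p q (by rw [h])

section Helpers

theorem mem_insert_sigma {st : St A V X} {a b : A} {p : V a × X} {q : V b × X}
    (h : (⟨b, q⟩ : Σ a, V a × X) ∈ insert (⟨a, p⟩ : Σ a, V a × X) st) :
    (∃ hba : b = a, hba ▸ q = p) ∨ (⟨b, q⟩ : Σ a, V a × X) ∈ st := by
  rcases h with h | h
  · obtain ⟨hba, hq⟩ := Sigma.mk.inj_iff.mp h
    subst hba
    exact Or.inl ⟨rfl, eq_of_heq hq⟩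
  · exact Or.inr h

theorem mem_rg_tch {st : St A V X} {a : A} {x : X} (h : x ∈ rg st a) : x ∈ tch st := by
  obtain ⟨u, hu⟩ := h; exact ⟨a, u, hu⟩

theorem imgE_mono {st st' : St A V X} (h : st ⊆ st') (a : A) :
    imgE F st a ⊆ imgE F st' a := by
  rintro e ⟨u, w, x, y, hadj, h1, h2, rfl⟩
  exact ⟨u, w, x, y, hadj, h h1, h h2, rfl⟩

theorem cov_mono {st st' : St A V X} (h : st ⊆ st') : cov F st ⊆ cov F st' := by
  rintro e he
  rcases Set.mem_iUnion.mp he with ⟨a, ha⟩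
  exact Set.mem_iUnion.mpr ⟨a, imgE_mono F h a ha⟩

theorem mem_imgE_endpoints {st : St A V X} {a : A} {e : Sym2 X} (h : e ∈ imgE F st a) :
    ∃ x y, e = s(x, y) ∧ x ∈ rg st a ∧ y ∈ rg st a := by
  obtain ⟨u, w, x, y, hadj, h1, h2, rfl⟩ := h
  exact ⟨x, y, rfl, ⟨u, h1⟩, ⟨w, h2⟩⟩

theorem imgE_insert_of_ne {st : St A V X} {a b : A} {p : V a × X} (hba : b ≠ a) :
    imgE F (insert (⟨a, p⟩ : Σ a, V a × X) st) b = imgE F st b := by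
  apply Set.Subset.antisymm
  · rintro e ⟨u, w, x, y, hadj, h1, h2, rfl⟩
    rcases mem_insert_sigma h1 with ⟨hb, _⟩ | h1' 
    · exact absurd hb hba
    rcases mem_insert_sigma h2 with ⟨hb, _⟩ | h2'
    · exact absurd hb hba
    exact ⟨u, w, x, y, hadj, h1', h2', rfl⟩
  · exact imgE_mono F (Set.subset_insert _ _) b

theorem imgE_span_eq {st : St A V X} {a : A} {u : V a} {x : X}
    (hnadj : ∀ w ∈ dm st a, ¬ (F a).Adj u w) (c : A) :
    imgE F (insert (⟨a, (u, x)⟩ : Σ a, V a × X) st) c = imgE F st c := by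
  rcases eq_or_ne c a with rfl | hca
  swap
  · exact imgE_insert_of_ne F hca
  apply Set.Subset.antisymm
  · rintro e ⟨u', w', x', y', hadj, h1, h2, rfl⟩
    rcases mem_insert_sigma h1 with ⟨_, hq1⟩ | h1'
    · obtain ⟨rfl, rfl⟩ := Prod.mk_inj.mp hq1
      rcases mem_insert_sigma h2 with ⟨_, hq2⟩ | h2'
      · obtain ⟨rfl, rfl⟩ := Prod.mk_inj.mp hq2
        exact absurd hadj (F _).irrefl
      · exact absurd hadj (hnadj w' ⟨y', h2'⟩)
    · rcases mem_insert_sigma h2 with ⟨_, hq2⟩ | h2'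
      · obtain ⟨rfl, rfl⟩ := Prod.mk_inj.mp hq2
        exact absurd hadj.symm (hnadj u' ⟨x', h1'⟩)
      · exact ⟨u', w', x', y', hadj, h1', h2', rfl⟩
  · exact imgE_mono F (Set.subset_insert _ _) _

theorem imgE_tot_subset {st : St A V X} {a : A} {u : V a} {y : X} :
    imgE F (insert (⟨a, (u, y)⟩ : Σ a, V a × X) st) a ⊆ imgE F st a ∪ {e | y ∈ e} := by
  rintro e ⟨u', w', x', y', hadj, h1, h2, rfl⟩
  rcases mem_insert_sigma h1 with ⟨_, hq1⟩ | h1'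
  · obtain ⟨rfl, rfl⟩ := Prod.mk_inj.mp hq1
    exact Or.inr (Sym2.mem_mk_left _ _)
  rcases mem_insert_sigma h2 with ⟨_, hq2⟩ | h2'
  · obtain ⟨rfl, rfl⟩ := Prod.mk_inj.mp hq2
    exact Or.inr (Sym2.mem_mk_right _ _)
  exact Or.inl ⟨u', w', x', y', hadj, h1', h2', rfl⟩

theorem imgE_cover_subset {st : St A V X} {a : A} {x y : X}
    (hun : unused st a) (hadj : (F a).Adj (u₀ a) (w₀ a)) :
    imgE F (insert (⟨a, (u₀ a, x)⟩ : Σ a, V a × X)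
      (insert (⟨a, (w₀ a, y)⟩ : Σ a, V a × X) st)) a ⊆ {s(x, y)} := by
  rintro e ⟨u', w', x', y', hadj', h1, h2, rfl⟩
  have mem_cases : ∀ (v : V a) (z : X),
      (⟨a, (v, z)⟩ : Σ a, V a × X) ∈ insert (⟨a, (u₀ a, x)⟩ : Σ a, V a × X)
        (insert (⟨a, (w₀ a, y)⟩ : Σ a, V a × X) st) →
      (v = u₀ a ∧ z = x) ∨ (v = w₀ a ∧ z = y) := by
    intro v z hm
    rcases mem_insert_sigma hm with ⟨_, hq⟩ | hm'
    · exact Or.inl (Prod.mk_inj.mp hq)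
    rcases mem_insert_sigma hm' with ⟨_, hq⟩ | hm''
    · exact Or.inr (Prod.mk_inj.mp hq)
    · exact absurd hm'' (hun _)
  rcases mem_cases _ _ h1 with ⟨rfl, rfl⟩ | ⟨rfl, rfl⟩ <;>
    rcases mem_cases _ _ h2 with ⟨rfl, rfl⟩ | ⟨rfl, rfl⟩
  · exact absurd hadj' (F a).irrefl
  · rfl
  · exact Sym2.eq_swap
  · exact absurd hadj' (F a).irrefl

end Helpers

theorem Good_step {st : St A V X} (hG : Good F H st)
    (hadj0 : ∀ a, (F a).Adj (u₀ a) (w₀ a)) (t : Task A V X) :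
    Good F H (step F H u₀ w₀ st t) := by
  cases t with
  | cover x y =>
      simp only [step]
      split
      swap
      · exact hG
      next h =>
        set a := h.2.2.choose with ha_def
        obtain ⟨hun, hxH, hyH⟩ := h.2.2.choose_spec
        constructor
        · intro b v z z' h1 h2
          rcases mem_insert_sigma h1 with ⟨rfl, hq1⟩ | h1' <;>
            [skip; rcases mem_insert_sigma h1' with ⟨rfl, hq1⟩ | h1'']
          · obtain ⟨hv1, rfl⟩ := Prod.mk_inj.mp hq1
            rcases mem_insert_sigma h2 with ⟨_, hq2⟩ | h2' <;>
              [skip; rcases mem_insert_sigma h2' with ⟨_, hq2⟩ | h2'']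
            · exact (Prod.mk_inj.mp hq2).2.symm
            · obtain ⟨hv2, rfl⟩ := Prod.mk_inj.mp hq2
              exact absurd (hv1.symm.trans hv2) (hadj0 a).ne
            · exact absurd h2'' (hun _)
          · obtain ⟨hv1, rfl⟩ := Prod.mk_inj.mp hq1
            rcases mem_insert_sigma h2 with ⟨_, hq2⟩ | h2' <;>
              [skip; rcases mem_insert_sigma h2' with ⟨_, hq2⟩ | h2'']
            · obtain ⟨hv2, rfl⟩ := Prod.mk_inj.mp hq2
              exact absurd (hv1.symm.trans hv2) (hadj0 a).ne.symm
            · exact (Prod.mk_inj.mp hq2).2.symm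
            · exact absurd h2'' (hun _)
          · rcases mem_insert_sigma h2 with ⟨rfl, hq2⟩ | h2' <;>
              [skip; rcases mem_insert_sigma h2' with ⟨rfl, hq2⟩ | h2'']
            · exact absurd h1'' (hun _)
            · exact absurd h1'' (hun _)
            · exact hG.func h1'' h2''
        · intro b v v' z h1 h2
          rcases mem_insert_sigma h1 with ⟨rfl, hq1⟩ | h1' <;>
            [skip; rcases mem_insert_sigma h1' with ⟨rfl, hq1⟩ | h1'']
          · obtain ⟨rfl, rfl⟩ := Prod.mk_inj.mp hq1
            rcases mem_insert_sigma h2 with ⟨_, hq2⟩ | h2' <;>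
              [skip; rcases mem_insert_sigma h2' with ⟨_, hq2⟩ | h2'']
            · exact (Prod.mk_inj.mp hq2).1.symm
            · exact absurd (Prod.mk_inj.mp hq2).2 h.1
            · exact absurd h2'' (hun _)
          · obtain ⟨rfl, rfl⟩ := Prod.mk_inj.mp hq1
            rcases mem_insert_sigma h2 with ⟨_, hq2⟩ | h2' <;>
              [skip; rcases mem_insert_sigma h2' with ⟨_, hq2⟩ | h2'']
            · exact absurd (Prod.mk_inj.mp hq2).2.symm h.1
            · exact (Prod.mk_inj.mp hq2).1.symm
            · exact absurd h2'' (hun _)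
          · rcases mem_insert_sigma h2 with ⟨rfl, hq2⟩ | h2' <;>
              [skip; rcases mem_insert_sigma h2' with ⟨rfl, hq2⟩ | h2'']
            · exact absurd h1'' (hun _)
            · exact absurd h1'' (hun _)
            · exact hG.inj h1'' h2''
        · intro b v z h1
          rcases mem_insert_sigma h1 with ⟨rfl, hq1⟩ | h1' <;>
            [skip; rcases mem_insert_sigma h1' with ⟨rfl, hq1⟩ | h1'']
          · rw [(Prod.mk_inj.mp hq1).2]; exact hxH
          · rw [(Prod.mk_inj.mp hq1).2]; exact hyH
          · exact hG.avoid h1''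
        · intro b c e h1 h2
          by_cases hba : b = a <;> by_cases hca : c = a
          · rw [hba, hca]
          · subst hba
            have he := imgE_cover_subset F u₀ w₀ hun (hadj0 a) h1
            rw [imgE_insert_of_ne F hca, imgE_insert_of_ne F hca] at h2
            rw [Set.mem_singleton_iff] at he
            subst he
            exact absurd (Set.mem_iUnion.mpr ⟨c, h2⟩) h.2.1
          · subst hca
            have he := imgE_cover_subset F u₀ w₀ hun (hadj0 a) h2
            rw [imgE_insert_of_ne F hba, imgE_insert_of_ne F hba] at h1
            rw [Set.mem_singleton_iff] at he
            subst he
            exact absurd (Set.mem_iUnion.mpr ⟨b, h1⟩) h.2.1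
          · rw [imgE_insert_of_ne F hba, imgE_insert_of_ne F hba] at h1
            rw [imgE_insert_of_ne F hca, imgE_insert_of_ne F hca] at h2
            exact hG.disj h1 h2
  | span a x =>
      simp only [step]
      split
      swap
      · exact hG
      next h =>
        obtain ⟨hu, hnadj⟩ := h.2.2.choose_spec
        set u := h.2.2.choose with hu_def
        constructor
        · intro b v z z' h1 h2
          rcases mem_insert_sigma h1 with ⟨rfl, hq1⟩ | h1'
          · obtain ⟨rfl, rfl⟩ := Prod.mk_inj.mp hq1
            rcases mem_insert_sigma h2 with ⟨_, hq2⟩ | h2'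
            · exact (Prod.mk_inj.mp hq2).2.symm
            · exact absurd ⟨z', h2'⟩ hu
          · rcases mem_insert_sigma h2 with ⟨rfl, hq2⟩ | h2'
            · obtain ⟨rfl, rfl⟩ := Prod.mk_inj.mp hq2
              exact absurd ⟨z, h1'⟩ hu
            · exact hG.func h1' h2'
        · intro b v v' z h1 h2
          rcases mem_insert_sigma h1 with ⟨rfl, hq1⟩ | h1'
          · obtain ⟨rfl, rfl⟩ := Prod.mk_inj.mp hq1
            rcases mem_insert_sigma h2 with ⟨_, hq2⟩ | h2'
            · exact (Prod.mk_inj.mp hq2).1.symm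
            · exact absurd ⟨v', h2'⟩ h.1
          · rcases mem_insert_sigma h2 with ⟨rfl, hq2⟩ | h2'
            · obtain ⟨rfl, rfl⟩ := Prod.mk_inj.mp hq2
              exact absurd ⟨v, h1'⟩ h.1
            · exact hG.inj h1' h2'
        · intro b v z h1
          rcases mem_insert_sigma h1 with ⟨rfl, hq1⟩ | h1'
          · rw [(Prod.mk_inj.mp hq1).2]; exact h.2.1
          · exact hG.avoid h1'
        · intro b c e h1 h2
          rw [imgE_span_eq F hnadj] at h1 h2
          exact hG.disj h1 h2
  | tot a v0 =>
      simp only [step]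
      split
      swap
      · exact hG
      next h =>
        obtain ⟨hyt, hyH⟩ := h.2.choose_spec
        set y := h.2.choose with hy_def
        constructor
        · intro b v z z' h1 h2
          rcases mem_insert_sigma h1 with ⟨rfl, hq1⟩ | h1'
          · obtain ⟨rfl, rfl⟩ := Prod.mk_inj.mp hq1
            rcases mem_insert_sigma h2 with ⟨_, hq2⟩ | h2'
            · exact (Prod.mk_inj.mp hq2).2.symm
            · exact absurd ⟨z', h2'⟩ h.1
          · rcases mem_insert_sigma h2 with ⟨rfl, hq2⟩ | h2'
            · obtain ⟨rfl, rfl⟩ := Prod.mk_inj.mp hq2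
              exact absurd ⟨z, h1'⟩ h.1
            · exact hG.func h1' h2'
        · intro b v v' z h1 h2
          rcases mem_insert_sigma h1 with ⟨rfl, hq1⟩ | h1'
          · obtain ⟨rfl, rfl⟩ := Prod.mk_inj.mp hq1
            rcases mem_insert_sigma h2 with ⟨_, hq2⟩ | h2'
            · exact (Prod.mk_inj.mp hq2).1.symm
            · exact absurd (mem_rg_tch ⟨v', h2'⟩) hyt
          · rcases mem_insert_sigma h2 with ⟨rfl, hq2⟩ | h2'
            · obtain ⟨rfl, rfl⟩ := Prod.mk_inj.mp hq2
              exact absurd (mem_rg_tch ⟨v, h1'⟩) hyt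
            · exact hG.inj h1' h2'
        · intro b v z h1
          rcases mem_insert_sigma h1 with ⟨rfl, hq1⟩ | h1'
          · rw [(Prod.mk_inj.mp hq1).2]; exact hyH
          · exact hG.avoid h1'
        · intro b c e h1 h2
          by_cases hba : b = a <;> by_cases hca : c = a
          · rw [hba, hca]
          · subst hba
            rw [imgE_insert_of_ne F hca] at h2
            rcases imgE_tot_subset F h1 with h1' | h1'
            · exact hG.disj h1' h2
            · obtain ⟨x1, y1, rfl, hx1, hy1⟩ := mem_imgE_endpoints F h2
              rcases Sym2.mem_iff.mp h1' with rfl | rfl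
              · exact absurd (mem_rg_tch hx1) hyt
              · exact absurd (mem_rg_tch hy1) hyt
          · subst hca
            rw [imgE_insert_of_ne F hba] at h1
            rcases imgE_tot_subset F h2 with h2' | h2'
            · exact hG.disj h1 h2'
            · obtain ⟨x1, y1, rfl, hx1, hy1⟩ := mem_imgE_endpoints F h1
              rcases Sym2.mem_iff.mp h2' with rfl | rfl
              · exact absurd (mem_rg_tch hx1) hyt
              · exact absurd (mem_rg_tch hy1) hyt
          · rw [imgE_insert_of_ne F hba] at h1
            rw [imgE_insert_of_ne F hca] at h2
            exact hG.disj h1 h2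

section Union

theorem mem_imgE_iUnion {ι : Type u} [LinearOrder ι] {f : ι → St A V X}
    (hmono : ∀ i j, i ≤ j → f i ⊆ f j) {a : A} {e : Sym2 X}
    (he : e ∈ imgE F (⋃ i, f i) a) : ∃ i, e ∈ imgE F (f i) a := by
  obtain ⟨u, w, x, y, hadj, h1, h2, rfl⟩ := he
  obtain ⟨i, hi⟩ := Set.mem_iUnion.mp h1
  obtain ⟨j, hj⟩ := Set.mem_iUnion.mp h2
  rcases le_total i j with hij | hij
  · exact ⟨j, u, w, x, y, hadj, hmono i j hij hi, hj, rfl⟩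
  · exact ⟨i, u, w, x, y, hadj, hi, hmono j i hij hj, rfl⟩

theorem Good_iUnion {ι : Type u} [LinearOrder ι] {f : ι → St A V X}
    (hmono : ∀ i j, i ≤ j → f i ⊆ f j) (hG : ∀ i, Good F H (f i)) :
    Good F H (⋃ i, f i) := by
  have pair2 : ∀ {p q : Σ a : A, V a × X}, p ∈ ⋃ i, f i → q ∈ ⋃ i, f i →
      ∃ i, p ∈ f i ∧ q ∈ f i := by
    intro p q hp hq
    obtain ⟨i, hi⟩ := Set.mem_iUnion.mp hp
    obtain ⟨j, hj⟩ := Set.mem_iUnion.mp hq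
    rcases le_total i j with hij | hij
    · exact ⟨j, hmono i j hij hi, hj⟩
    · exact ⟨i, hi, hmono j i hij hj⟩
  constructor
  · intro a u x x' h1 h2
    obtain ⟨i, hi1, hi2⟩ := pair2 h1 h2
    exact (hG i).func hi1 hi2
  · intro a u u' x h1 h2
    obtain ⟨i, hi1, hi2⟩ := pair2 h1 h2
    exact (hG i).inj hi1 hi2
  · intro a u x h1
    obtain ⟨i, hi⟩ := Set.mem_iUnion.mp h1
    exact (hG i).avoid hi
  · intro a b e h1 h2
    obtain ⟨i, hi⟩ := mem_imgE_iUnion F hmono h1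
    obtain ⟨j, hj⟩ := mem_imgE_iUnion F hmono h2
    rcases le_total i j with hij | hij
    · exact (hG j).disj (imgE_mono F (hmono i j hij) a hi) hj
    · exact (hG i).disj hi (imgE_mono F (hmono j i hij) b hj)

end Union

section Rec

variable (κ : Cardinal.{u}) (tk : κ.ord.ToType → Option (Task A V X))

noncomputable def after : κ.ord.ToType → St A V X :=
  WellFounded.fix wellFounded_lt fun β ih =>
    (tk β).elim (⋃ γ : Set.Iio β, ih γ.1 γ.2) fun t =>
      step F H u₀ w₀ (⋃ γ : Set.Iio β, ih γ.1 γ.2) t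

noncomputable def before (β : κ.ord.ToType) : St A V X :=
  ⋃ γ : Set.Iio β, after F H u₀ w₀ κ tk γ.1

theorem after_eq (β : κ.ord.ToType) :
    after F H u₀ w₀ κ tk β = (tk β).elim (before F H u₀ w₀ κ tk β)
      (fun t => step F H u₀ w₀ (before F H u₀ w₀ κ tk β) t) := by
  rw [after, WellFounded.fix_eq]
  rfl

theorem before_subset_after (β : κ.ord.ToType) :
    before F H u₀ w₀ κ tk β ⊆ after F H u₀ w₀ κ tk β := by
  rw [after_eq]
  cases tk β with
  | none => exact fun p hp => hp
  | some t => exact subset_step F H u₀ w₀ _ t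

theorem after_subset_before {γ β : κ.ord.ToType} (h : γ < β) :
    after F H u₀ w₀ κ tk γ ⊆ before F H u₀ w₀ κ tk β :=
  Set.subset_iUnion (fun γ' : Set.Iio β => after F H u₀ w₀ κ tk γ'.1) ⟨γ, h⟩

theorem after_mono {γ β : κ.ord.ToType} (h : γ ≤ β) :
    after F H u₀ w₀ κ tk γ ⊆ after F H u₀ w₀ κ tk β := by
  rcases lt_or_eq_of_le h with h | rfl
  · exact (after_subset_before F H u₀ w₀ κ tk h).trans (before_subset_after F H u₀ w₀ κ tk β)
  · exact fun p hp => hp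

theorem after_diff_le_two (β : κ.ord.ToType) :
    Cardinal.mk ↥(after F H u₀ w₀ κ tk β \ before F H u₀ w₀ κ tk β) ≤ 2 := by
  rw [after_eq]
  cases tk β with
  | none => simp
  | some t => exact step_diff_le_two F H u₀ w₀ _ t

theorem after_subset_diffs (β : κ.ord.ToType) :
    after F H u₀ w₀ κ tk β ⊆
      ⋃ γ : Set.Iic β, (after F H u₀ w₀ κ tk γ.1 \ before F H u₀ w₀ κ tk γ.1) := by
  induction β using WellFoundedLT.induction with
  | ind β ih =>
    intro p hp
    by_cases hb : p ∈ before F H u₀ w₀ κ tk β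
    · obtain ⟨S, ⟨⟨γ, hγ⟩, rfl⟩, hpS⟩ := hb
      obtain ⟨S', ⟨⟨δ, hδ⟩, rfl⟩, hp'⟩ := ih γ hγ hpS
      exact Set.mem_iUnion.mpr ⟨⟨δ, Set.mem_Iic.mpr (le_of_lt (lt_of_le_of_lt (Set.mem_Iic.mp hδ) (Set.mem_Iio.mp hγ)))⟩, hp'⟩
    · exact Set.mem_iUnion.mpr ⟨⟨β, le_refl β⟩, hp, hb⟩

theorem card_before_lt (hκ : Cardinal.aleph0 ≤ κ) (β : κ.ord.ToType) :
    Cardinal.mk ↥(before F H u₀ w₀ κ tk β) < κ := by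
  have hsub : before F H u₀ w₀ κ tk β ⊆
      ⋃ γ : Set.Iio β, (after F H u₀ w₀ κ tk γ.1 \ before F H u₀ w₀ κ tk γ.1) := by
    intro p hp
    obtain ⟨S, ⟨⟨γ, hγ⟩, rfl⟩, hpS⟩ := hp
    obtain ⟨S', ⟨⟨δ, hδ⟩, rfl⟩, hp'⟩ := after_subset_diffs F H u₀ w₀ κ tk γ hpS
    exact Set.mem_iUnion.mpr ⟨⟨δ, Set.mem_Iio.mpr (lt_of_le_of_lt (Set.mem_Iic.mp hδ) (Set.mem_Iio.mp hγ))⟩, hp'⟩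
  calc Cardinal.mk ↥(before F H u₀ w₀ κ tk β)
      ≤ Cardinal.mk ↥(⋃ γ : Set.Iio β,
          (after F H u₀ w₀ κ tk γ.1 \ before F H u₀ w₀ κ tk γ.1)) :=
        Cardinal.mk_le_mk_of_subset hsub
    _ ≤ Cardinal.sum (fun γ : Set.Iio β =>
          Cardinal.mk ↥(after F H u₀ w₀ κ tk γ.1 \ before F H u₀ w₀ κ tk γ.1)) :=
        Cardinal.mk_iUnion_le_sum_mk
    _ ≤ Cardinal.sum (fun _ : Set.Iio β => 2) :=
        Cardinal.sum_le_sum _ _ (fun γ => after_diff_le_two F H u₀ w₀ κ tk γ.1)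
    _ = Cardinal.mk ↥(Set.Iio β) * 2 := Cardinal.sum_const' _ _
    _ < κ := Cardinal.mul_lt_of_lt hκ (Cardinal.mk_Iio_ord_toType β)
        (lt_of_lt_of_le (Cardinal.nat_lt_aleph0 2) hκ)

theorem Good_before (hadj0 : ∀ a, (F a).Adj (u₀ a) (w₀ a)) (β : κ.ord.ToType) :
    Good F H (before F H u₀ w₀ κ tk β) ∧ Good F H (after F H u₀ w₀ κ tk β) := by
  induction β using WellFoundedLT.induction with
  | ind β ih =>
    have hGb : Good F H (before F H u₀ w₀ κ tk β) := by
      apply Good_iUnion F H (f := fun γ : Set.Iio β => after F H u₀ w₀ κ tk γ.1)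
      · intro i j hij
        exact after_mono F H u₀ w₀ κ tk (Subtype.coe_le_coe.mpr hij)
      · intro i
        exact (ih i.1 i.2).2
    refine ⟨hGb, ?_⟩
    rw [after_eq]
    cases tk β with
    | none => exact hGb
    | some t => exact Good_step F H u₀ w₀ hGb hadj0 t

end Rec

section Cards

theorem card_used_le (st : St A V X) :
    Cardinal.mk ↥{a | ¬ unused st a} ≤ Cardinal.mk ↥st := by
  have hex : ∀ a : ↥{a | ¬ unused st a}, ∃ p : V a.1 × X,
      (⟨a.1, p⟩ : Σ a, V a × X) ∈ st := by
    rintro ⟨a, ha⟩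
    simp only [Set.mem_setOf_eq, unused, not_forall, not_not] at ha
    exact ha
  choose p hp using hex
  have hinj : Function.Injective (fun a : ↥{a | ¬ unused st a} =>
      (⟨⟨a.1, p a⟩, hp a⟩ : ↥st)) := by
    intro a b hab
    apply Subtype.ext
    have := congrArg (fun z : ↥st => z.1.1) hab
    exact this
  exact Cardinal.mk_le_of_injective hinj

theorem card_dm_le (st : St A V X) (a : A) :
    Cardinal.mk ↥(dm st a) ≤ Cardinal.mk ↥st := by
  have hex : ∀ u : ↥(dm st a), ∃ x : X, (⟨a, (u.1, x)⟩ : Σ a, V a × X) ∈ st :=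
    fun u => u.2
  choose x hx using hex
  have hinj : Function.Injective (fun u : ↥(dm st a) =>
      (⟨⟨a, (u.1, x u)⟩, hx u⟩ : ↥st)) := by
    intro u v huv
    apply Subtype.ext
    have h1 := congrArg (fun z : ↥st => z.1) huv
    simp only at h1
    obtain ⟨-, h2⟩ := Sigma.mk.inj_iff.mp h1
    exact congrArg Prod.fst (eq_of_heq h2)
  exact Cardinal.mk_le_of_injective hinj

theorem card_tch_le (st : St A V X) :
    Cardinal.mk ↥(tch st) ≤ Cardinal.mk ↥st := by
  have hex : ∀ z : ↥(tch st), ∃ q : Σ a : A, V a × X, q ∈ st ∧ q.2.2 = z.1 := by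
    rintro ⟨z, a, u, h⟩
    exact ⟨⟨a, (u, z)⟩, h, rfl⟩
  choose q hq using hex
  have hinj : Function.Injective (fun z : ↥(tch st) => (⟨q z, (hq z).1⟩ : ↥st)) := by
    intro z z' hzz
    apply Subtype.ext
    have h1 := congrArg (fun w : ↥st => w.1.2.2) hzz
    simp only at h1
    rw [(hq z).2, (hq z').2] at h1
    exact h1
  exact Cardinal.mk_le_of_injective hinj

end Cards

section Success

variable (κ : Cardinal.{u}) (tk : κ.ord.ToType → Option (Task A V X))
theorem cover_success (hκ : Cardinal.aleph0 ≤ κ) (hAκ : Cardinal.mk A = κ)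
    (hHdisj : ∀ {a b : A} {x : X}, x ∈ H a → x ∈ H b → a = b)
    (hadj0 : ∀ a, (F a).Adj (u₀ a) (w₀ a)) {β : κ.ord.ToType} {x y : X}
    (htk : tk β = some (.cover x y)) (hxy : x ≠ y) :
    s(x, y) ∈ cov F (after F H u₀ w₀ κ tk β) := by
  set st := before F H u₀ w₀ κ tk β with hst
  rw [after_eq, htk]
  simp only [Option.elim, step]
  by_cases hcov : s(x, y) ∈ cov F st
  · split
    · next h =>
        exact cov_mono F
          ((Set.subset_insert _ _).trans (Set.subset_insert _ _)) hcov
    · next h => exact hcov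
  · have hguard : x ≠ y ∧ s(x, y) ∉ cov F st ∧
        ∃ a, unused st a ∧ x ∉ H a ∧ y ∉ H a := by
      refine ⟨hxy, hcov, ?_⟩
      by_contra hno
      push_neg at hno
      have hsub : (Set.univ : Set A) ⊆ {a | ¬ unused st a} ∪ ({a | x ∈ H a} ∪ {a | y ∈ H a}) := by
        intro a _
        by_cases h1 : unused st a
        · by_cases h2 : x ∈ H a
          · exact Or.inr (Or.inl h2)
          · exact Or.inr (Or.inr (hno a h1 h2))
        · exact Or.inl h1
      have h1 : Cardinal.mk ↥{a | ¬ unused st a} < κ :=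
        lt_of_le_of_lt (card_used_le _) (card_before_lt F H u₀ w₀ κ tk hκ β)
      have hx1 : Cardinal.mk ↥{a | x ∈ H a} ≤ 1 :=
        Cardinal.mk_le_one_iff_set_subsingleton.mpr (fun a ha b hb => hHdisj ha hb)
      have hy1 : Cardinal.mk ↥{a | y ∈ H a} ≤ 1 :=
        Cardinal.mk_le_one_iff_set_subsingleton.mpr (fun a ha b hb => hHdisj ha hb)
      have hlt : Cardinal.mk ↥({a | ¬ unused st a} ∪ ({a | x ∈ H a} ∪ {a | y ∈ H a})) < κ := by
        refine lt_of_le_of_lt (Cardinal.mk_union_le _ _) ?_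
        refine Cardinal.add_lt_of_lt hκ h1 ?_
        refine lt_of_le_of_lt (Cardinal.mk_union_le _ _) ?_
        have hone : (1 : Cardinal) < κ := lt_of_lt_of_le Cardinal.one_lt_aleph0 hκ
        exact Cardinal.add_lt_of_lt hκ (lt_of_le_of_lt hx1 hone) (lt_of_le_of_lt hy1 hone)
      have : κ ≤ Cardinal.mk ↥({a | ¬ unused st a} ∪ ({a | x ∈ H a} ∪ {a | y ∈ H a})) := by
        rw [← hAκ]
        calc Cardinal.mk A = Cardinal.mk ↥(Set.univ : Set A) := Cardinal.mk_univ.symm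
          _ ≤ _ := Cardinal.mk_le_mk_of_subset hsub
      exact absurd (lt_of_le_of_lt this hlt) (lt_irrefl _)
    rw [dif_pos hguard]
    refine Set.mem_iUnion.mpr ⟨hguard.2.2.choose, ?_⟩
    exact ⟨_, _, x, y, hadj0 _, Set.mem_insert _ _,
      Set.mem_insert_of_mem _ (Set.mem_insert _ _), rfl⟩

theorem span_success (hκ : Cardinal.aleph0 ≤ κ) {β : κ.ord.ToType} {a : A} {x : X}
    (htk : tk β = some (.span a x))
    (hnd : ∀ D : Set (V a), Cardinal.mk ↥D < κ → ¬ IsDominatingSet (F a) D)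
    (hxH : x ∉ H a) :
    x ∈ rg (after F H u₀ w₀ κ tk β) a := by
  set st := before F H u₀ w₀ κ tk β with hst
  rw [after_eq, htk]
  simp only [Option.elim, step]
  by_cases hrg : x ∈ rg st a
  · split
    · next h => exact ⟨hrg.choose, Set.mem_insert_of_mem _ hrg.choose_spec⟩
    · next h => exact hrg
  · have hdom : ∃ u, u ∉ dm st a ∧ ∀ w ∈ dm st a, ¬ (F a).Adj u w := by
      have hsmall : Cardinal.mk ↥(dm st a) < κ :=
        lt_of_le_of_lt (card_dm_le _ _) (card_before_lt F H u₀ w₀ κ tk hκ β)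
      have := hnd (dm st a) hsmall
      simp only [IsDominatingSet, not_forall, not_exists] at this
      obtain ⟨v, hv1, hv2⟩ := this
      exact ⟨v, hv1, fun w hw hadj => hv2 w ⟨hw, hadj⟩⟩
    rw [dif_pos ⟨hrg, hxH, hdom⟩]
    exact ⟨_, Set.mem_insert _ _⟩

theorem tot_success (hκ : Cardinal.aleph0 ≤ κ)
    (R : Set X) (hRcard : Cardinal.mk ↥R = κ) (hRH : ∀ a, ∀ x ∈ R, x ∉ H a)
    {β : κ.ord.ToType} {a : A} {u : V a}
    (htk : tk β = some (.tot a u)) :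
    u ∈ dm (after F H u₀ w₀ κ tk β) a := by
  set st := before F H u₀ w₀ κ tk β with hst
  rw [after_eq, htk]
  simp only [Option.elim, step]
  by_cases hdm : u ∈ dm st a
  · split
    · next h => exact ⟨hdm.choose, Set.mem_insert_of_mem _ hdm.choose_spec⟩
    · next h => exact hdm
  · have hy : ∃ y, y ∉ tch st ∧ y ∉ H a := by
      have hsmall : Cardinal.mk ↥(tch st) < κ :=
        lt_of_le_of_lt (card_tch_le _) (card_before_lt F H u₀ w₀ κ tk hκ β)
      by_contra hno
      push_neg at hno
      have hsub : R ⊆ tch st := by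
        intro y hyR
        by_contra hyt
        exact hRH a y hyR (hno y hyt)
      have : κ ≤ Cardinal.mk ↥(tch st) := hRcard ▸ Cardinal.mk_le_mk_of_subset hsub
      exact absurd (lt_of_le_of_lt this hsmall) (lt_irrefl _)
    rw [dif_pos ⟨hdm, hy⟩]
    exact ⟨_, Set.mem_insert _ _⟩

end Success

end Stmt17

open Stmt17

/-- let `𝓕 = {F a : a ∈ A}` be a family of non-empty graphs, each of
order at most `ℵ`, with `|A| = ℵ` infinite. For each `a` choose a cardinal `ℵc a`
with `ℵc a = ℵ` whenever the domination number of `F a` is `< ℵ`, and `ℵc a ≤ ℵ`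
arbitrary otherwise. Then there is a decomposition `{Γ a : a ∈ A}` of the complete
graph `K_ℵ` with `Γ a ≅ F a` and `|V(K_ℵ) \ V(Γ a)| = ℵc a` for every `a`. -/
theorem stmt_17 {A : Type u} (ℵ : Cardinal.{u}) (hℵ : Cardinal.aleph0 ≤ ℵ)
    (hA : Cardinal.mk A = ℵ)
    (V : A → Type u) (hV : ∀ a, Cardinal.mk (V a) ≤ ℵ)
    (F : ∀ a, SimpleGraph (V a)) (hne : ∀ a, (F a).edgeSet.Nonempty)
    (ℵc : A → Cardinal.{u}) (hcle : ∀ a, ℵc a ≤ ℵ)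
    (hforced : ∀ a, (∃ D : Set (V a), IsDominatingSet (F a) D ∧ Cardinal.mk ↥D < ℵ) →
      ℵc a = ℵ)
    (X : Type u) (hX : Cardinal.mk X = ℵ) :
    ∃ G : A → (⊤ : SimpleGraph X).Subgraph, IsDecomposition G ∧
      ∀ a, Nonempty (F a ≃g (G a).coe) ∧ Cardinal.mk ↥((G a).vertsᶜ) = ℵc a := by
  classical
  -- chosen edge in each graph
  have hadj_ex : ∀ a, ∃ p : V a × V a, (F a).Adj p.1 p.2 := by
    intro a
    obtain ⟨e, he⟩ := hne a
    induction e with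
    | _ u w => exact ⟨(u, w), he⟩
  set u₀ : ∀ a, V a := fun a => (hadj_ex a).choose.1 with hu₀
  set w₀ : ∀ a, V a := fun a => (hadj_ex a).choose.2 with hw₀
  have hadj0 : ∀ a, (F a).Adj (u₀ a) (w₀ a) := fun a => (hadj_ex a).choose_spec
  -- the forbidden sets H a and the reserve set R
  have hcard1 : Cardinal.mk ((Σ a : A, Quotient.out (ℵc a)) ⊕ Quotient.out ℵ) ≤
      Cardinal.mk X := by
    rw [hX, Cardinal.mk_sum]
    simp only [Cardinal.lift_id, Cardinal.mk_sigma, Cardinal.mk_out]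
    have h1 : (Cardinal.sum fun a : A => ℵc a) ≤ ℵ := by
      calc Cardinal.sum (fun a : A => ℵc a) ≤ Cardinal.sum (fun _ : A => ℵ) :=
            Cardinal.sum_le_sum _ _ (fun a => hcle a)
        _ = Cardinal.mk A * ℵ := Cardinal.sum_const' _ _
        _ = ℵ := by rw [hA, Cardinal.mul_eq_self hℵ]
    calc (Cardinal.sum fun a : A => ℵc a) + ℵ ≤ ℵ + ℵ := add_le_add_left h1 _
      _ = ℵ := Cardinal.add_eq_self hℵ
  obtain ⟨g⟩ := (Cardinal.le_def _ _).mp hcard1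
  set H : A → Set X := fun a => Set.range (fun t : Quotient.out (ℵc a) => g (Sum.inl ⟨a, t⟩))
    with hH_def
  have hHcard : ∀ a, Cardinal.mk ↥(H a) = ℵc a := by
    intro a
    rw [hH_def]
    rw [Cardinal.mk_range_eq _ ?_, Cardinal.mk_out]
    intro t t' htt
    have := g.injective htt
    rw [Sum.inl.injEq] at this
    obtain ⟨-, h2⟩ := Sigma.mk.inj_iff.mp this
    exact eq_of_heq h2
  have hHdisj : ∀ {a b : A} {x : X}, x ∈ H a → x ∈ H b → a = b := by
    intro a b x ⟨t, ht⟩ ⟨t', ht'⟩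
    have := g.injective (ht.trans ht'.symm)
    rw [Sum.inl.injEq] at this
    exact (Sigma.mk.inj_iff.mp this).1
  set R : Set X := Set.range (fun r : Quotient.out ℵ => g (Sum.inr r)) with hR_def
  have hRcard : Cardinal.mk ↥R = ℵ := by
    rw [hR_def, Cardinal.mk_range_eq _ (fun r r' hrr => Sum.inr.inj (g.injective hrr)),
      Cardinal.mk_out]
  have hRH : ∀ a, ∀ x ∈ R, x ∉ H a := by
    rintro a x ⟨r, hr⟩ ⟨t, ht⟩
    have := g.injective (ht.trans hr.symm)
    simp at this
  -- the task enumeration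
  have htask_card : Cardinal.mk (Task A V X) ≤ Cardinal.mk (ℵ.ord.ToType) := by
    rw [Cardinal.mk_ord_toType]
    have hfinj : Function.Injective (fun t : Task A V X =>
        (match t with
        | .cover x y => Sum.inl (x, y)
        | .span a x => Sum.inr (Sum.inl (a, x))
        | .tot a u => Sum.inr (Sum.inr ⟨a, u⟩) :
          (X × X) ⊕ ((A × X) ⊕ (Σ a : A, V a)))) := by
      intro t1 t2 h
      cases t1 <;> cases t2 <;>
        simp only [Sum.inl.injEq, Sum.inr.injEq, Prod.mk.injEq, Sigma.mk.inj_iff,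
          reduceCtorEq] at h
      · rw [h.1, h.2]
      · rw [h.1, h.2]
      · obtain ⟨rfl, h2⟩ := h
        rw [eq_of_heq h2]
    calc Cardinal.mk (Task A V X) ≤ Cardinal.mk ((X × X) ⊕ ((A × X) ⊕ (Σ a : A, V a))) :=
          Cardinal.mk_le_of_injective hfinj
      _ ≤ ℵ := by
          rw [Cardinal.mk_sum, Cardinal.mk_sum, Cardinal.mk_prod, Cardinal.mk_prod,
            Cardinal.mk_sigma]
          simp only [Cardinal.lift_id, hX, hA]
          have hXX : ℵ * ℵ = ℵ := Cardinal.mul_eq_self hℵ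
          have hsig : (Cardinal.sum fun a : A => Cardinal.mk (V a)) ≤ ℵ := by
            calc Cardinal.sum (fun a : A => Cardinal.mk (V a)) ≤
                Cardinal.sum (fun _ : A => ℵ) := Cardinal.sum_le_sum _ _ (fun a => hV a)
              _ = Cardinal.mk A * ℵ := Cardinal.sum_const' _ _
              _ = ℵ := by rw [hA, Cardinal.mul_eq_self hℵ]
          calc ℵ * ℵ + (ℵ * ℵ + Cardinal.sum fun a : A => Cardinal.mk (V a)) ≤
              ℵ * ℵ + (ℵ * ℵ + ℵ) := by
                exact add_le_add_right (add_le_add_right hsig _) _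
            _ = ℵ := by rw [hXX, Cardinal.add_eq_self hℵ, Cardinal.add_eq_self hℵ]
  obtain ⟨ι⟩ := (Cardinal.le_def _ _).mp htask_card
  set tk : ℵ.ord.ToType → Option (Task A V X) :=
    fun β => if h : ∃ t, ι t = β then some h.choose else none with htk_def
  have htk : ∀ t, tk (ι t) = some t := by
    intro t
    have hex : ∃ t', ι t' = ι t := ⟨t, rfl⟩
    rw [htk_def]
    simp only [dif_pos hex]
    exact congrArg some (ι.injective hex.choose_spec)
  -- run the construction
  set sF : St A V X := ⋃ β, after F H u₀ w₀ ℵ tk β with hsF_def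
  have hafter_sub : ∀ β, after F H u₀ w₀ ℵ tk β ⊆ sF := fun β => Set.subset_iUnion _ β
  have hGoodF : Good F H sF := Good_iUnion F H
    (fun i j hij => after_mono F H u₀ w₀ ℵ tk hij)
    (fun β => (Good_before F H u₀ w₀ ℵ tk hadj0 β).2)
  have htot : ∀ a (u : V a), ∃ x : X, (⟨a, (u, x)⟩ : Σ a, V a × X) ∈ sF := by
    intro a u
    obtain ⟨x, hx⟩ := tot_success F H u₀ w₀ ℵ tk hℵ R hRcard hRH (htk (.tot a u))
    exact ⟨x, hafter_sub _ hx⟩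
  choose ft hft using htot
  have hfinj : ∀ a, Function.Injective (ft a) := by
    intro a u u' h
    have h2 := hft a u'
    rw [← h] at h2
    exact hGoodF.inj (hft a u) h2
  have havoid : ∀ a u, ft a u ∉ H a := fun a u => hGoodF.avoid (hft a u)
  have hfunc : ∀ {a : A} {u : V a} {x : X},
      (⟨a, (u, x)⟩ : Σ a, V a × X) ∈ sF → ft a u = x :=
    fun h => hGoodF.func (hft _ _) h
  refine ⟨fun a =>
    { verts := Set.range (ft a)
      Adj := fun x y => ∃ u w, (F a).Adj u w ∧ ft a u = x ∧ ft a w = y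
      adj_sub := by
        rintro x y ⟨u, w, huw, rfl, rfl⟩
        rw [SimpleGraph.top_adj]
        exact fun h => huw.ne (hfinj a h)
      edge_vert := by
        rintro x y ⟨u, w, huw, rfl, rfl⟩
        exact ⟨u, rfl⟩
      symm := by
        constructor
        rintro x y ⟨u, w, huw, rfl, rfl⟩
        exact ⟨w, u, huw.symm, rfl, rfl⟩ }, ?_, ?_⟩
  · -- decomposition
    intro e he
    induction e with
    | _ x y =>
      rw [SimpleGraph.mem_edgeSet, SimpleGraph.top_adj] at he
      have hedge : ∀ (b : A) (x' y' : X),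
          (∃ u w, (F b).Adj u w ∧ ft b u = x' ∧ ft b w = y') ↔
            s(x', y') ∈ imgE F sF b := by
        intro b x' y'
        constructor
        · rintro ⟨u, w, huw, rfl, rfl⟩
          exact ⟨u, w, _, _, huw, hft b u, hft b w, rfl⟩
        · rintro ⟨u, w, x'', y'', huw, h1, h2, he2⟩
          rcases Sym2.eq_iff.mp he2 with ⟨rfl, rfl⟩ | ⟨rfl, rfl⟩
          · exact ⟨u, w, huw, hfunc h1, hfunc h2⟩
          · exact ⟨w, u, huw.symm, hfunc h2, hfunc h1⟩
      have hc := cover_success F H u₀ w₀ ℵ tk hℵ hA hHdisj hadj0 (htk (.cover x y)) he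
      have hc' : s(x, y) ∈ cov F sF := cov_mono F (hafter_sub _) hc
      obtain ⟨a, ha⟩ := Set.mem_iUnion.mp hc'
      refine ⟨a, ?_, ?_⟩
      · exact SimpleGraph.Subgraph.mem_edgeSet.mpr ((hedge a x y).mpr ha)
      · intro b hb
        exact hGoodF.disj ((hedge b x y).mp (SimpleGraph.Subgraph.mem_edgeSet.mp hb)) ha
  · intro a
    constructor
    · -- isomorphism
      refine ⟨⟨Equiv.ofInjective (ft a) (hfinj a), ?_⟩⟩
      intro u v
      rw [SimpleGraph.Subgraph.coe_adj]
      show (∃ u' w, (F a).Adj u' w ∧ ft a u' = ft a u ∧ ft a w = ft a v) ↔ (F a).Adj u v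
      constructor
      · rintro ⟨u', w', huw, h1, h2⟩
        rw [← hfinj a h1, ← hfinj a h2]
        exact huw
      · intro h
        exact ⟨u, v, h, rfl, rfl⟩
    · -- complement cardinality
      show Cardinal.mk ↥((Set.range (ft a))ᶜ) = ℵc a
      rcases lt_or_eq_of_le (hcle a) with hlt | heq
      · have hnd : ∀ D : Set (V a), Cardinal.mk ↥D < ℵ → ¬ IsDominatingSet (F a) D := by
          intro D hD hdom
          exact absurd (hforced a ⟨D, hdom, hD⟩) (ne_of_lt hlt)
        have hspan : ∀ x, x ∉ H a → x ∈ Set.range (ft a) := by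
          intro x hx
          obtain ⟨u, hu⟩ := span_success F H u₀ w₀ ℵ tk hℵ (htk (.span a x)) hnd hx
          exact ⟨u, hfunc (hafter_sub _ hu)⟩
        have hcompl : (Set.range (ft a))ᶜ = H a := by
          ext x
          simp only [Set.mem_compl_iff]
          constructor
          · intro hxr
            by_contra hxH
            exact hxr (hspan x hxH)
          · rintro hxH ⟨u, rfl⟩
            exact havoid a u hxH
        rw [hcompl]
        exact hHcard a
      · apply le_antisymm
        · calc Cardinal.mk ↥((Set.range (ft a))ᶜ) ≤ Cardinal.mk X := Cardinal.mk_set_le _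
            _ = ℵc a := hX.trans heq.symm
        · have hsub : H a ⊆ (Set.range (ft a))ᶜ := by
            intro x hxH
            rintro ⟨u, rfl⟩
            exact havoid a u hxH
          calc ℵc a = Cardinal.mk ↥(H a) := (hHcard a).symm
            _ ≤ _ := Cardinal.mk_le_mk_of_subset hsub
end

section
/- Let ℵ be an infinite cardinal and let G be a decomposition of the complete graph K_ℵ such that for some cardinal ℵ' < ℵ the following hold: (R1) every graph in G has order at most ℵ'; and (R2) for every two distinct vertices x, y of K_ℵ, the set G(x) ∩ G(y) of graphs of G containing both x and y has cardinality at most ℵ'. Then G is resolvable, i.e., G can be partitioned into resolution classes. -/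
universe u

/-- A set `𝒢` of subgraphs of `Λ` is a decomposition of `Λ`: the edge sets of the
members of `𝒢` partition the edge set of `Λ`. -/
def IsDecompositionSet {V : Type*} (Λ : SimpleGraph V) (𝒢 : Set Λ.Subgraph) : Prop :=
  ∀ e ∈ Λ.edgeSet, ∃! Γ, Γ ∈ 𝒢 ∧ e ∈ Γ.edgeSet

/-- A resolution class: a set of pairwise vertex-disjoint subgraphs whose vertex
sets together cover all the vertices. -/
def IsResolutionClass {V : Type*} {Λ : SimpleGraph V} (C : Set Λ.Subgraph) : Prop :=
  (C.Pairwise fun Γ₁ Γ₂ => Disjoint Γ₁.verts Γ₂.verts) ∧ ∀ x : V, ∃ Γ ∈ C, x ∈ Γ.verts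

/-- A decomposition `𝒢` is resolvable if it can be partitioned into resolution
classes. -/
def IsResolvable {V : Type*} {Λ : SimpleGraph V} (𝒢 : Set Λ.Subgraph) : Prop :=
  ∃ P : Set (Set Λ.Subgraph), ⋃₀ P = 𝒢 ∧ P.PairwiseDisjoint id ∧
    ∀ C ∈ P, IsResolutionClass C


open Cardinal Set

namespace Stmt18Aux

variable {X : Type u}

abbrev S (X : Type u) := (⊤ : SimpleGraph X).Subgraph

section Rec
variable {A : Type u} [LinearOrder A]

/-- `Γ` has been assigned (to some class) strictly before step `a`. -/
def Asg (f : A → Option (A × S X)) (a : A) (Γ : S X) : Prop :=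
  ∃ b < a, ∃ k, f b = some (k, Γ)

/-- class `k` has been used strictly before step `a`. -/
def Used (f : A → Option (A × S X)) (a : A) (k : A) : Prop :=
  ∃ b < a, ∃ Γ, f b = some (k, Γ)

/-- vertices covered by class `k` strictly before step `a`. -/
def CV (f : A → Option (A × S X)) (a : A) (k : A) : Set X :=
  {x | ∃ b < a, ∃ Γ : S X, f b = some (k, Γ) ∧ x ∈ Γ.verts}

variable (𝒢 : Set (S X))

open scoped Classical in
/-- one step of the construction. -/
noncomputable def core (ASG : S X → Prop) (USED : A → Prop) (CVf : A → Set X)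
    (t : (A × X) ⊕ ↥𝒢) : Option (A × S X) :=
  match t with
  | .inl (k, x) =>
      if x ∈ CVf k then none
      else if h : ∃ Γ, Γ ∈ 𝒢 ∧ x ∈ Γ.verts ∧ ¬ ASG Γ ∧ Disjoint Γ.verts (CVf k)
        then some (k, h.choose) else none
  | .inr Γ =>
      if ASG Γ.1 then none
      else if h : ∃ k, ¬ USED k then some (h.choose, Γ.1) else none

variable [WellFoundedLT A] (e : A → (A × X) ⊕ ↥𝒢)

noncomputable def g : A → Option (A × S X) :=
  WellFoundedLT.fix (motive := fun _ => Option (A × S X)) (fun a prior =>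
    letI f : A → Option (A × S X) := fun b => if h : b < a then prior b h else none
    core 𝒢 (Asg f a) (Used f a) (CV f a) (e a))

theorem asg_congr {f f' : A → Option (A × S X)} {a : A} (h : ∀ b < a, f b = f' b) :
    Asg f a = Asg f' a := by
  funext Γ; apply propext
  constructor <;> rintro ⟨b, hb, k, hf⟩ <;> exact ⟨b, hb, k, by rw [← hf, h b hb]⟩

theorem used_congr {f f' : A → Option (A × S X)} {a : A} (h : ∀ b < a, f b = f' b) :
    Used f a = Used f' a := by
  funext k; apply propext
  constructor <;> rintro ⟨b, hb, Γ, hf⟩ <;> exact ⟨b, hb, Γ, by rw [← hf, h b hb]⟩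

theorem cv_congr {f f' : A → Option (A × S X)} {a : A} (h : ∀ b < a, f b = f' b) :
    CV f a = CV f' a := by
  funext k; ext x
  constructor <;> rintro ⟨b, hb, Γ, hf, hx⟩ <;> exact ⟨b, hb, Γ, by rw [← hf, h b hb], hx⟩

theorem g_eq (a : A) :
    g 𝒢 e a = core 𝒢 (Asg (g 𝒢 e) a) (Used (g 𝒢 e) a) (CV (g 𝒢 e) a) (e a) := by
  have key : ∀ (f : A → Option (A × S X)), (∀ b < a, f b = g 𝒢 e b) →
      core 𝒢 (Asg f a) (Used f a) (CV f a) (e a)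
        = core 𝒢 (Asg (g 𝒢 e) a) (Used (g 𝒢 e) a) (CV (g 𝒢 e) a) (e a) := by
    intro f hf
    rw [asg_congr hf, used_congr hf, cv_congr hf]
  conv_lhs => rw [g, WellFoundedLT.fix_eq]
  exact key _ (fun b hb => (dif_pos hb).trans rfl)


theorem g_some {a k : A} {Γ : S X} (h : g 𝒢 e a = some (k, Γ)) :
    Γ ∈ 𝒢 ∧ ¬ Asg (g 𝒢 e) a Γ ∧ Disjoint Γ.verts (CV (g 𝒢 e) a k) := by
  rw [g_eq] at h
  rcases he : e a with ⟨k', x⟩ | Γ'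
  · rw [he] at h
    simp only [core] at h
    split_ifs at h with h1 h2
    rcases Option.some.inj h with ⟨rfl, rfl⟩
    obtain ⟨hg, -, hasg, hdisj⟩ := h2.choose_spec
    exact ⟨hg, hasg, hdisj⟩
  · rw [he] at h
    simp only [core] at h
    split_ifs at h with h1 h2
    rcases Option.some.inj h with ⟨rfl, rfl⟩
    refine ⟨Γ'.2, h1, Set.disjoint_right.2 fun {y} hy _ => ?_⟩
    obtain ⟨b, hb, Γ₀, hf, -⟩ := hy
    exact h2.choose_spec ⟨b, hb, Γ₀, hf⟩

/-- If a "cover x by class k" task occurs at `a` and there are enough graphs, then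
class `k` covers `x`. -/
theorem cover {a k : A} {x : X} (he : e a = .inl (k, x))
    (hbig : x ∉ CV (g 𝒢 e) a k → ∃ Γ, Γ ∈ 𝒢 ∧ x ∈ Γ.verts ∧ ¬ Asg (g 𝒢 e) a Γ ∧
      Disjoint Γ.verts (CV (g 𝒢 e) a k)) :
    ∃ b, ∃ Γ : S X, g 𝒢 e b = some (k, Γ) ∧ x ∈ Γ.verts := by
  by_cases h1 : x ∈ CV (g 𝒢 e) a k
  · obtain ⟨b, _, Γ, hf, hx⟩ := h1
    exact ⟨b, Γ, hf, hx⟩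
  · have h2 := hbig h1
    have hg : g 𝒢 e a = some (k, h2.choose) := by
      rw [g_eq, he]; simp only [core]; rw [if_neg h1, dif_pos h2]
    exact ⟨a, h2.choose, hg, h2.choose_spec.2.1⟩

/-- If an "assign Γ" task occurs at `a` and there is an unused class, then `Γ` gets
assigned somewhere. -/
theorem total {a : A} {Γ : ↥𝒢} (he : e a = .inr Γ) (hk : ∃ k, ¬ Used (g 𝒢 e) a k) :
    ∃ b k, g 𝒢 e b = some (k, Γ.1) := by
  by_cases h1 : Asg (g 𝒢 e) a Γ.1
  · obtain ⟨b, _, k, hf⟩ := h1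
    exact ⟨b, k, hf⟩
  · have hg : g 𝒢 e a = some (hk.choose, Γ.1) := by
      rw [g_eq, he]; simp only [core]; rw [if_neg h1, dif_pos hk]
    exact ⟨a, hk.choose, hg⟩

end Rec
end Stmt18Aux

namespace Stmt18Aux

theorem mk_iUnion_le_mul {α ι : Type u} {s : Set α} {t : ι → Set α} (hsub : s ⊆ ⋃ i, t i)
    {c : Cardinal.{u}} (ht : ∀ i, #(t i) ≤ c) : #s ≤ #ι * c :=
  (mk_le_mk_of_subset hsub).trans ((mk_iUnion_le_sum_mk).trans
    (((sum_le_sum _ _ ht)).trans_eq (sum_const' _ _)))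

end Stmt18Aux

namespace Stmt18Aux

theorem main {X : Type u} (ℵ : Cardinal.{u}) (hℵ : Cardinal.aleph0 ≤ ℵ)
    (hX : Cardinal.mk X = ℵ)
    (𝒢 : Set (⊤ : SimpleGraph X).Subgraph)
    (hdec : IsDecompositionSet (⊤ : SimpleGraph X) 𝒢)
    (ℵ' : Cardinal.{u}) (hℵ' : ℵ' < ℵ)
    (hR1 : ∀ Γ ∈ 𝒢, Cardinal.mk ↥Γ.verts ≤ ℵ')
    (hR2 : ∀ x y : X, x ≠ y →
      Cardinal.mk ↥{Γ ∈ 𝒢 | x ∈ Γ.verts ∧ y ∈ Γ.verts} ≤ ℵ')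
    (A : Type u) [LinearOrder A] [WellFoundedLT A]
    (hA : Cardinal.mk A = ℵ) (hIio : ∀ a : A, Cardinal.mk ↥(Set.Iio a) < ℵ) :
    IsResolvable 𝒢 := by
  classical
  open Cardinal in
  have hXinf : Infinite X := Cardinal.infinite_iff.2 (hX ▸ hℵ)
  have hXne : Nonempty X := inferInstance
  have hAne : Nonempty A := Cardinal.mk_ne_zero_iff.1 (by rw [hA]; exact (aleph0_pos.trans_le hℵ).ne')
  -- 𝒢 has at most ℵ members
  have hG : #↥𝒢 ≤ ℵ := by
    have hsplit : 𝒢 ⊆ {Γ : S X | Γ ∈ 𝒢 ∧ ∃ x ∈ Γ.verts, ∃ y ∈ Γ.verts, x ≠ y} ∪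
        {Γ : S X | Γ ∈ 𝒢 ∧ ∀ x ∈ Γ.verts, ∀ y ∈ Γ.verts, x = y} := by
      intro Γ hΓ
      by_cases h : ∃ x ∈ Γ.verts, ∃ y ∈ Γ.verts, x ≠ y
      · exact Or.inl ⟨hΓ, h⟩
      · push_neg at h
        exact Or.inr ⟨hΓ, h⟩
    have h2 : #↥{Γ : S X | Γ ∈ 𝒢 ∧ ∃ x ∈ Γ.verts, ∃ y ∈ Γ.verts, x ≠ y} ≤ ℵ := by
      have hsub : {Γ : S X | Γ ∈ 𝒢 ∧ ∃ x ∈ Γ.verts, ∃ y ∈ Γ.verts, x ≠ y} ⊆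
          ⋃ p : {p : X × X // p.1 ≠ p.2},
            {Γ : S X | Γ ∈ 𝒢 ∧ p.1.1 ∈ Γ.verts ∧ p.1.2 ∈ Γ.verts} := by
        rintro Γ ⟨hΓ, x, hx, y, hy, hxy⟩
        exact Set.mem_iUnion.2 ⟨⟨(x, y), hxy⟩, hΓ, hx, hy⟩
      refine (mk_iUnion_le_mul hsub (fun p => hR2 p.1.1 p.1.2 p.2)).trans ?_
      have hXX : #{p : X × X // p.1 ≠ p.2} ≤ ℵ := by
        refine (mk_subtype_le _).trans ?_
        simp only [mk_prod, Cardinal.lift_id]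
        rw [hX, mul_eq_self hℵ]
      calc #{p : X × X // p.1 ≠ p.2} * ℵ' ≤ ℵ * ℵ := mul_le_mul' hXX hℵ'.le
        _ = ℵ := mul_eq_self hℵ
    have h1 : #↥{Γ : S X | Γ ∈ 𝒢 ∧ ∀ x ∈ Γ.verts, ∀ y ∈ Γ.verts, x = y} ≤ ℵ := by
      have hinj : Function.Injective
          (fun Γ : ↥{Γ : S X | Γ ∈ 𝒢 ∧ ∀ x ∈ Γ.verts, ∀ y ∈ Γ.verts, x = y} =>
            if h : (Γ.1.verts).Nonempty then some h.choose else (none : Option X)) := by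
        rintro ⟨Γ, hΓ𝒢, hΓ⟩ ⟨Δ, hΔ𝒢, hΔ⟩ heq
        simp only at heq
        have hAdjΓ : ∀ u v, ¬ Γ.Adj u v := fun u v h =>
          (Γ.adj_sub h).ne (hΓ u h.fst_mem v h.snd_mem)
        have hAdjΔ : ∀ u v, ¬ Δ.Adj u v := fun u v h =>
          (Δ.adj_sub h).ne (hΔ u h.fst_mem v h.snd_mem)
        have hverts : Γ.verts = Δ.verts := by
          by_cases hn1 : Γ.verts.Nonempty <;> by_cases hn2 : Δ.verts.Nonempty
          · rw [dif_pos hn1, dif_pos hn2] at heq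
            have hz := Option.some.inj heq
            ext w
            constructor
            · intro hw
              rw [hΓ w hw hn1.choose hn1.choose_spec, hz]
              exact hn2.choose_spec
            · intro hw
              rw [hΔ w hw hn2.choose hn2.choose_spec, ← hz]
              exact hn1.choose_spec
          · rw [dif_pos hn1, dif_neg hn2] at heq
            exact absurd heq (by simp)
          · rw [dif_neg hn1, dif_pos hn2] at heq
            exact absurd heq (by simp)
          · rw [Set.not_nonempty_iff_eq_empty.1 hn1, Set.not_nonempty_iff_eq_empty.1 hn2]
        have hGD : Γ = Δ := by
          refine SimpleGraph.Subgraph.ext hverts ?_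
          funext u v
          exact propext ⟨fun h => absurd h (hAdjΓ u v), fun h => absurd h (hAdjΔ u v)⟩
        exact Subtype.ext hGD
      refine (mk_le_of_injective hinj).trans ?_
      rw [mk_option, hX]
      exact (add_one_eq hℵ).le
    exact (mk_le_mk_of_subset hsplit).trans
      ((mk_union_le _ _).trans ((add_le_add h2 h1).trans (add_eq_self hℵ).le))
  -- members of 𝒢 through a fixed vertex: at least ℵ many
  have hGx : ∀ x : X, ℵ ≤ #↥{Γ : S X | Γ ∈ 𝒢 ∧ x ∈ Γ.verts} := by
    intro x
    by_contra hlt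
    push_neg at hlt
    have hcov : ({x}ᶜ : Set X) ⊆ ⋃ Γ : ↥{Γ : S X | Γ ∈ 𝒢 ∧ x ∈ Γ.verts}, Γ.1.verts := by
      intro y hy
      have hxy : x ≠ y := fun h => hy (by simp [h])
      have hedge : s(x, y) ∈ (⊤ : SimpleGraph X).edgeSet := by
        rw [SimpleGraph.mem_edgeSet, SimpleGraph.top_adj]; exact hxy
      obtain ⟨Γ, ⟨hΓ, hmem⟩, -⟩ := hdec _ hedge
      have hadj : Γ.Adj x y := (SimpleGraph.Subgraph.mem_edgeSet).1 hmem
      exact Set.mem_iUnion.2 ⟨⟨Γ, hΓ, hadj.fst_mem⟩, hadj.snd_mem⟩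
    have h1 : #↥({x}ᶜ : Set X) = ℵ := by
      rw [← hX]
      exact mk_compl_of_infinite {x} (by rw [hX, mk_singleton]; exact one_lt_aleph0.trans_le hℵ)
    have h2 := mk_iUnion_le_mul hcov (fun Γ => hR1 _ Γ.2.1)
    rw [h1] at h2
    exact absurd h2 (not_le.2 (mul_lt_of_lt hℵ hlt hℵ'))
  -- the task enumeration
  have hTaskNe : Nonempty ((A × X) ⊕ ↥𝒢) := ⟨.inl (hAne.some, hXne.some)⟩
  have hTask : #((A × X) ⊕ ↥𝒢) ≤ #A := by
    simp only [mk_sum, mk_prod, Cardinal.lift_id, hA, hX]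
    calc ℵ * ℵ + #↥𝒢 ≤ ℵ * ℵ + ℵ := add_le_add le_rfl hG
      _ = ℵ := by rw [mul_eq_self hℵ, add_eq_self hℵ]
  obtain ⟨femb⟩ := (Cardinal.le_def _ _).1 hTask
  let e : A → (A × X) ⊕ ↥𝒢 := Function.invFun femb
  have hesurj : Function.Surjective e := Function.invFun_surjective femb.2
  -- the partial vertex sets of the classes are small
  have hCV : ∀ (a kk : A), #↥(CV (g 𝒢 e) a kk) < ℵ := by
    intro a kk
    have hsub : CV (g 𝒢 e) a kk ⊆
        ⋃ b : ↥(Set.Iio a), {x | ∃ Γ : S X, g 𝒢 e b.1 = some (kk, Γ) ∧ x ∈ Γ.verts} := by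
      rintro x ⟨b, hb, Γ, hf, hx⟩
      exact Set.mem_iUnion.2 ⟨⟨b, hb⟩, Γ, hf, hx⟩
    have hcomp : ∀ b : ↥(Set.Iio a),
        #↥{x | ∃ Γ : S X, g 𝒢 e b.1 = some (kk, Γ) ∧ x ∈ Γ.verts} ≤ ℵ' := by
      intro b
      obtain hgb | ⟨⟨k', Γ⟩, hgb⟩ := (g 𝒢 e b.1).eq_none_or_eq_some
      · have hempty : {x | ∃ Γ : S X, g 𝒢 e b.1 = some (kk, Γ) ∧ x ∈ Γ.verts} ⊆ ∅ := by
          rintro x ⟨Γ, hf, -⟩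
          rw [hgb] at hf
          exact absurd hf (by simp)
        refine (mk_le_mk_of_subset hempty).trans ?_
        simp
      · have hsub2 : {x | ∃ Γ₀ : S X, g 𝒢 e b.1 = some (kk, Γ₀) ∧ x ∈ Γ₀.verts} ⊆ Γ.verts := by
          rintro x ⟨Γ₀, hf, hx⟩
          rw [hgb] at hf
          have h2 : Γ = Γ₀ := congrArg Prod.snd (Option.some.inj hf)
          rw [h2]
          exact hx
        exact (mk_le_mk_of_subset hsub2).trans (hR1 Γ (g_some 𝒢 e hgb).1)
    exact (mk_iUnion_le_mul hsub hcomp).trans_lt (mul_lt_of_lt hℵ (hIio a) hℵ')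
  -- few graphs have been assigned before any given step
  have hAsg : ∀ a : A, #↥{Γ : S X | Asg (g 𝒢 e) a Γ} < ℵ := by
    intro a
    have hle : #↥{Γ : S X | Asg (g 𝒢 e) a Γ} ≤ #↥(Set.Iio a) := by
      refine mk_le_of_injective (f := fun Γ => (⟨Γ.2.choose, Γ.2.choose_spec.1⟩ : ↥(Set.Iio a))) ?_
      rintro ⟨Γ, hΓ⟩ ⟨Γ', hΓ'⟩ hbb
      simp only [Subtype.mk.injEq] at hbb ⊢
      obtain ⟨k, hk⟩ := hΓ.choose_spec.2
      obtain ⟨k', hk'⟩ := hΓ'.choose_spec.2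
      rw [show hΓ.choose = hΓ'.choose from congrArg Subtype.val hbb] at hk
      exact congrArg Prod.snd (Option.some.inj (hk.symm.trans hk'))
    exact hle.trans_lt (hIio a)
  -- there is always an unused class
  have hUsed : ∀ a : A, ∃ k, ¬ Used (g 𝒢 e) a k := by
    intro a
    by_contra hc
    push_neg at hc
    have hle : #↥{k : A | Used (g 𝒢 e) a k} ≤ #↥(Set.Iio a) := by
      refine mk_le_of_injective (f := fun k => (⟨k.2.choose, k.2.choose_spec.1⟩ : ↥(Set.Iio a))) ?_
      rintro ⟨k, hk⟩ ⟨k', hk'⟩ hbb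
      simp only [Subtype.mk.injEq] at hbb ⊢
      obtain ⟨Γ, hΓ⟩ := hk.choose_spec.2
      obtain ⟨Γ', hΓ'⟩ := hk'.choose_spec.2
      rw [show hk.choose = hk'.choose from congrArg Subtype.val hbb] at hΓ
      exact congrArg Prod.fst (Option.some.inj (hΓ.symm.trans hΓ'))
    have huniv : {k : A | Used (g 𝒢 e) a k} = Set.univ := Set.eq_univ_of_forall hc
    rw [huniv, mk_univ, hA] at hle
    exact absurd (hle.trans_lt (hIio a)) (lt_irrefl ℵ)
  -- there is always a suitable graph to cover x in class kk
  have hbig : ∀ (a kk : A) (x : X), x ∉ CV (g 𝒢 e) a kk →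
      ∃ Γ, Γ ∈ 𝒢 ∧ x ∈ Γ.verts ∧ ¬ Asg (g 𝒢 e) a Γ ∧
        Disjoint Γ.verts (CV (g 𝒢 e) a kk) := by
    intro a kk x hx
    set W := CV (g 𝒢 e) a kk with hW
    set Bad : Set (S X) := {Γ : S X | Asg (g 𝒢 e) a Γ} ∪
      ⋃ y : ↥W, {Γ : S X | Γ ∈ 𝒢 ∧ x ∈ Γ.verts ∧ y.1 ∈ Γ.verts} with hBadDef
    have hBad : #↥Bad < ℵ := by
      refine (mk_union_le _ _).trans_lt (Cardinal.add_lt_of_lt hℵ (hAsg a) ?_)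
      have hcomp : ∀ y : ↥W, #↥{Γ : S X | Γ ∈ 𝒢 ∧ x ∈ Γ.verts ∧ y.1 ∈ Γ.verts} ≤ ℵ' := by
        intro y
        have hne : x ≠ y.1 := fun h => hx (h ▸ y.2)
        exact hR2 x y.1 hne
      exact (mk_iUnion_le_mul Set.Subset.rfl hcomp).trans_lt
        (mul_lt_of_lt hℵ (hCV a kk) hℵ')
    have hns : ¬ ({Γ : S X | Γ ∈ 𝒢 ∧ x ∈ Γ.verts} ⊆ Bad) := fun hsub =>
      absurd ((hGx x).trans (mk_le_mk_of_subset hsub)) (not_le.2 hBad)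
    obtain ⟨Γ, hΓmem, hΓbad⟩ := Set.not_subset.1 hns
    refine ⟨Γ, hΓmem.1, hΓmem.2, fun h => hΓbad (Set.mem_union_left _ h), ?_⟩
    by_contra hnd
    obtain ⟨y, hy1, hy2⟩ := Set.not_disjoint_iff.1 hnd
    exact hΓbad (Set.mem_union_right _
      (Set.mem_iUnion.2 ⟨⟨y, hy2⟩, hΓmem.1, hΓmem.2, hy1⟩))
  -- each graph is assigned at most once
  have huniq : ∀ {a a' k k' : A} {Γ : S X},
      g 𝒢 e a = some (k, Γ) → g 𝒢 e a' = some (k', Γ) → a = a' ∧ k = k' := by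
    intro a a' k k' Γ h h'
    rcases lt_trichotomy a a' with hlt | rfl | hlt
    · exact absurd ⟨a, hlt, k, h⟩ (g_some 𝒢 e h').2.1
    · have := Option.some.inj (h.symm.trans h')
      exact ⟨rfl, congrArg Prod.fst this⟩
    · exact absurd ⟨a', hlt, k', h'⟩ (g_some 𝒢 e h).2.1
  -- members of the same class are vertex-disjoint
  have hdisjcl : ∀ {k a a' : A} {Γ Γ' : S X}, g 𝒢 e a = some (k, Γ) →
      g 𝒢 e a' = some (k, Γ') → Γ ≠ Γ' → Disjoint Γ.verts Γ'.verts := by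
    have key : ∀ {k a a' : A} {Γ Γ' : S X}, a < a' → g 𝒢 e a = some (k, Γ) →
        g 𝒢 e a' = some (k, Γ') → Disjoint Γ'.verts Γ.verts := by
      intro k a a' Γ Γ' hlt h h'
      have hd := (g_some 𝒢 e h').2.2
      have hsub : Γ.verts ⊆ CV (g 𝒢 e) a' k := fun x hx => ⟨a, hlt, Γ, h, hx⟩
      exact hd.mono_right hsub
    intro k a a' Γ Γ' h h' hne
    rcases lt_trichotomy a a' with hlt | rfl | hlt
    · exact (key hlt h h').symm
    · exact absurd (congrArg Prod.snd (Option.some.inj (h.symm.trans h'))) hne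
    · exact key hlt h' h
  -- assemble the resolution classes
  let Cl : A → Set (S X) := fun k => {Γ | ∃ a, g 𝒢 e a = some (k, Γ)}
  refine ⟨Set.range Cl, ?_, ?_, ?_⟩
  · ext Γ
    constructor
    · rintro ⟨s, ⟨k, rfl⟩, a, ha⟩
      exact (g_some 𝒢 e ha).1
    · intro hΓ
      obtain ⟨a, ha⟩ := hesurj (.inr ⟨Γ, hΓ⟩)
      obtain ⟨b, k, hb⟩ := total 𝒢 e ha (hUsed a)
      exact ⟨Cl k, ⟨k, rfl⟩, ⟨b, hb⟩⟩
  · intro s hs t ht hst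
    obtain ⟨k, rfl⟩ := hs
    obtain ⟨k', rfl⟩ := ht
    simp only [Function.onFun, id]
    refine Set.disjoint_left.2 ?_
    rintro Γ ⟨a, ha⟩ ⟨a', ha'⟩
    obtain ⟨rfl, rfl⟩ := huniq ha ha'
    exact hst rfl
  · rintro C ⟨k, rfl⟩
    constructor
    · rintro Γ ⟨a, ha⟩ Γ' ⟨a', ha'⟩ hne
      exact hdisjcl ha ha' hne
    · intro x
      obtain ⟨a, ha⟩ := hesurj (.inl (k, x))
      obtain ⟨b, Γ, hb, hx⟩ := cover 𝒢 e ha (fun h1 => hbig a k x h1)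
      exact ⟨Γ, ⟨b, hb⟩, hx⟩

end Stmt18Aux

/-- let `𝒢` be a decomposition of the complete graph `K_ℵ` (`ℵ`
infinite) such that, for some cardinal `ℵ' < ℵ`, (R1) every member of `𝒢` has
order at most `ℵ'`, and (R2) for any two distinct vertices `x, y`, at most `ℵ'`
members of `𝒢` contain both `x` and `y`. Then `𝒢` is resolvable. -/
theorem stmt_18 {X : Type u} (ℵ : Cardinal.{u}) (hℵ : Cardinal.aleph0 ≤ ℵ)
    (hX : Cardinal.mk X = ℵ)
    (𝒢 : Set (⊤ : SimpleGraph X).Subgraph)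
    (hdec : IsDecompositionSet (⊤ : SimpleGraph X) 𝒢)
    (ℵ' : Cardinal.{u}) (hℵ' : ℵ' < ℵ)
    (hR1 : ∀ Γ ∈ 𝒢, Cardinal.mk ↥Γ.verts ≤ ℵ')
    (hR2 : ∀ x y : X, x ≠ y →
      Cardinal.mk ↥{Γ ∈ 𝒢 | x ∈ Γ.verts ∧ y ∈ Γ.verts} ≤ ℵ') :
    IsResolvable 𝒢 := by
  exact Stmt18Aux.main ℵ hℵ hX 𝒢 hdec ℵ' hℵ' hR1 hR2 (Cardinal.ord ℵ).ToType
    (by rw [Cardinal.mk_toType, Cardinal.card_ord])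
    (fun a => Cardinal.mk_Iio_ord_toType a)
end

section
/- Let ℵ be an infinite cardinal and let ℵ' < ℵ be a (possibly finite) cardinal. Let G be a decomposition of the complete graph K_ℵ into graphs each of order at most ℵ', and assume that the set of graphs of G that are not complete graphs has cardinality at most ℵ'. Then G is resolvable, i.e., G can be partitioned into resolution classes. -/
universe u

/-- A subgraph is a complete graph if any two distinct vertices of it are adjacent
in it. -/
def SubgraphIsComplete {V : Type*} {Λ : SimpleGraph V} (Γ : Λ.Subgraph) : Prop :=
  ∀ a ∈ Γ.verts, ∀ b ∈ Γ.verts, a ≠ b → Γ.Adj a b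

open Cardinal

private lemma aux_compl_nonempty {α : Type u} {s : Set α} (h : #s < #α) : ∃ x, x ∉ s := by
  by_contra hc
  push_neg at hc
  have : s = Set.univ := Set.eq_univ_of_forall hc
  rw [this, Cardinal.mk_univ] at h
  exact lt_irrefl _ h

private lemma aux_rec {α : Type*} {β : Type*} {r : α → α → Prop} (wf : WellFounded r)
    (P : ∀ t : α, (∀ s, r s t → β) → β → Prop)
    (h : ∀ t prior, ∃ out, P t prior out) :
    ∃ F : α → β, ∀ t, P t (fun s _ => F s) (F t) := by
  refine ⟨wf.fix (fun t prior => (h t prior).choose), fun t => ?_⟩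
  have e := wf.fix_eq (C := fun _ => β) (fun t prior => (h t prior).choose) t
  rw [e]
  exact (h t _).choose_spec

private lemma aux_pair_eq {β γ : Type u} {a c : β} {b d : γ}
    (h : (some (a, b) : Option (β × γ)) = some (c, d)) : a = c ∧ b = d := by
  injection h with h'
  exact ⟨congrArg Prod.fst h', congrArg Prod.snd h'⟩

private lemma aux_mk_some_le {ι β : Type u} (g : ι → Option β) :
    #{b : β | ∃ i, g i = some b} ≤ #ι := by
  choose f hf using fun b : {b : β | ∃ i, g i = some b} => b.2
  refine Cardinal.mk_le_of_injective (f := f) fun c c' he => Subtype.ext ?_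
  have h1 := hf c
  have h2 := hf c'
  rw [he, h2] at h1
  exact (Option.some.inj h1).symm

/-- let `ℵ` be infinite and `ℵ' < ℵ` a (possibly finite) cardinal.
If `𝒢` is a decomposition of the complete graph `K_ℵ` into graphs of order at most
`ℵ'` and the set of members of `𝒢` that are not complete graphs has cardinality at
most `ℵ'`, then `𝒢` is resolvable. -/
theorem stmt_19 {X : Type u} (ℵ : Cardinal.{u}) (hℵ : Cardinal.aleph0 ≤ ℵ)
    (hX : Cardinal.mk X = ℵ)
    (ℵ' : Cardinal.{u}) (hℵ' : ℵ' < ℵ)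
    (𝒢 : Set (⊤ : SimpleGraph X).Subgraph)
    (hdec : IsDecompositionSet (⊤ : SimpleGraph X) 𝒢)
    (hsmall : ∀ Γ ∈ 𝒢, Cardinal.mk ↥Γ.verts ≤ ℵ')
    (hcomp : Cardinal.mk ↥{Γ ∈ 𝒢 | ¬ SubgraphIsComplete Γ} ≤ ℵ') :
    IsResolvable 𝒢 := by
  classical
  haveI : Infinite X := Cardinal.infinite_iff.mpr (hX ▸ hℵ)
  -- unique graph through a pair
  have hQ : ∀ ⦃x y : X⦄, x ≠ y → ∃! Γ, Γ ∈ 𝒢 ∧ Γ.Adj x y := by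
    intro x y hxy
    have h := hdec s(x, y) (by simp [hxy])
    simpa using h
  -- the extension lemma
  have hext : ∀ (S : Set X) (U : Set (⊤ : SimpleGraph X).Subgraph) (x : X),
      #S < ℵ → #U < ℵ → x ∉ S →
      ∃ Γ, Γ ∈ 𝒢 ∧ Γ ∉ U ∧ x ∈ Γ.verts ∧ Disjoint Γ.verts S := by
    intro S U x hS hU hxS
    set B : Set X := {y | y = x ∨ y ∈ S ∨ ∃ Γ, Γ ∈ 𝒢 ∧ Γ.Adj x y ∧
      (Γ ∈ U ∨ ¬ SubgraphIsComplete Γ ∨ (SubgraphIsComplete Γ ∧ (Γ.verts ∩ S).Nonempty))} with hB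
    have hxs : ∀ s : ↥S, x ≠ s.1 := fun s h => hxS (h ▸ s.2)
    choose Qf hQf1 hQf2 using fun s : ↥S => (hQ (hxs s)).exists
    have hBsmall : #B < ℵ := by
      have hsub : B ⊆ {x} ∪ S ∪ (⋃ Γ : ↥(𝒢 ∩ U), (Γ.1.verts))
          ∪ (⋃ Γ : ↥{Γ ∈ 𝒢 | ¬ SubgraphIsComplete Γ}, (Γ.1.verts))
          ∪ (⋃ s : ↥S, (Qf s).verts) := by
        rintro y (rfl | hyS | ⟨Γ, hΓ, hadj, hcase⟩)
        · exact Or.inl (Or.inl (Or.inl (Or.inl rfl)))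
        · exact Or.inl (Or.inl (Or.inl (Or.inr hyS)))
        · rcases hcase with hU' | hnc | ⟨hc, s, hsΓ, hsS⟩
          · exact Or.inl (Or.inl (Or.inr (Set.mem_iUnion.mpr ⟨⟨Γ, hΓ, hU'⟩, hadj.snd_mem⟩)))
          · exact Or.inl (Or.inr (Set.mem_iUnion.mpr ⟨⟨Γ, hΓ, hnc⟩, hadj.snd_mem⟩))
          · have hxns : x ≠ s := hxs ⟨s, hsS⟩
            have hadjxs : Γ.Adj x s := hc x hadj.fst_mem s hsΓ hxns
            have : Γ = Qf ⟨s, hsS⟩ :=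
              (hQ hxns).unique ⟨hΓ, hadjxs⟩ ⟨hQf1 _, hQf2 _⟩
            exact Or.inr (Set.mem_iUnion.mpr ⟨⟨s, hsS⟩, this ▸ hadj.snd_mem⟩)
      have h1 : #(⋃ Γ : ↥(𝒢 ∩ U), (Γ.1.verts)) < ℵ := by
        refine lt_of_le_of_lt (Cardinal.mk_iUnion_le _) (Cardinal.mul_lt_of_lt hℵ ?_ ?_)
        · exact lt_of_le_of_lt (Cardinal.mk_le_mk_of_subset Set.inter_subset_right) hU
        · exact lt_of_le_of_lt (ciSup_le' fun Γ => hsmall Γ.1 Γ.2.1) hℵ'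
      have h2 : #(⋃ Γ : ↥{Γ ∈ 𝒢 | ¬ SubgraphIsComplete Γ}, (Γ.1.verts)) < ℵ := by
        refine lt_of_le_of_lt (Cardinal.mk_iUnion_le _) (Cardinal.mul_lt_of_lt hℵ ?_ ?_)
        · exact lt_of_le_of_lt hcomp hℵ'
        · exact lt_of_le_of_lt (ciSup_le' fun Γ => hsmall Γ.1 Γ.2.1) hℵ'
      have h3 : #(⋃ s : ↥S, (Qf s).verts) < ℵ := by
        refine lt_of_le_of_lt (Cardinal.mk_iUnion_le _) (Cardinal.mul_lt_of_lt hℵ hS ?_)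
        exact lt_of_le_of_lt (ciSup_le' fun s => hsmall (Qf s) (hQf1 s)) hℵ'
      refine lt_of_le_of_lt (Cardinal.mk_le_mk_of_subset hsub) ?_
      refine lt_of_le_of_lt (Cardinal.mk_union_le _ _) (Cardinal.add_lt_of_lt hℵ ?_ h3)
      refine lt_of_le_of_lt (Cardinal.mk_union_le _ _) (Cardinal.add_lt_of_lt hℵ ?_ h2)
      refine lt_of_le_of_lt (Cardinal.mk_union_le _ _) (Cardinal.add_lt_of_lt hℵ ?_ h1)
      refine lt_of_le_of_lt (Cardinal.mk_union_le _ _) (Cardinal.add_lt_of_lt hℵ ?_ hS)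
      exact lt_of_le_of_lt (Cardinal.mk_singleton x).le (lt_of_lt_of_le Cardinal.one_lt_aleph0 hℵ)
    obtain ⟨y, hy⟩ := aux_compl_nonempty (s := B) (by rw [hX]; exact hBsmall)
    have hxy : x ≠ y := fun h => hy (Or.inl h.symm)
    obtain ⟨hΓ𝒢, hΓadj⟩ := (hQ hxy).exists.choose_spec
    set Γ := (hQ hxy).exists.choose
    refine ⟨Γ, hΓ𝒢, ?_, hΓadj.fst_mem, ?_⟩
    · intro hU'
      exact hy (Or.inr (Or.inr ⟨Γ, hΓ𝒢, hΓadj, Or.inl hU'⟩))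
    · rw [Set.disjoint_left]
      intro a haΓ haS
      by_cases hc : SubgraphIsComplete Γ
      · exact hy (Or.inr (Or.inr ⟨Γ, hΓ𝒢, hΓadj, Or.inr (Or.inr ⟨hc, a, haΓ, haS⟩)⟩))
      · exact hy (Or.inr (Or.inr ⟨Γ, hΓ𝒢, hΓadj, Or.inr (Or.inl hc)⟩))
  -- 𝒢 has at most ℵ members
  have hprod : #(X × X) = ℵ := by
    rw [Cardinal.mk_prod, Cardinal.lift_id, hX, Cardinal.mul_eq_self hℵ]
  have h𝒢 : #↥𝒢 ≤ ℵ := by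
    have hsub : 𝒢 ⊆ {Γ | Γ ∈ 𝒢 ∧ ∃ p : X × X, Γ.Adj p.1 p.2} ∪ {Γ ∈ 𝒢 | ¬ SubgraphIsComplete Γ}
        ∪ {Γ | Γ.verts.Subsingleton} := by
      intro Γ hΓ
      by_cases hc : SubgraphIsComplete Γ
      · by_cases hv : Γ.verts.Subsingleton
        · exact Or.inr hv
        · rw [Set.not_subsingleton_iff] at hv
          obtain ⟨a, ha, b, hb, hab⟩ := hv
          exact Or.inl (Or.inl ⟨hΓ, (a, b), hc a ha b hb hab⟩)
      · exact Or.inl (Or.inr ⟨hΓ, hc⟩)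
    have hE : #↥{Γ | Γ ∈ 𝒢 ∧ ∃ p : X × X, Γ.Adj p.1 p.2} ≤ ℵ := by
      choose pf hpf using fun Γ : ↥{Γ | Γ ∈ 𝒢 ∧ ∃ p : X × X, Γ.Adj p.1 p.2} => Γ.2.2
      refine le_trans (Cardinal.mk_le_of_injective (f := pf) ?_) hprod.le
      intro Γ Γ' he
      have hadj := hpf Γ
      have hadj' := hpf Γ'
      rw [he] at hadj
      have hne : (pf Γ').1 ≠ (pf Γ').2 := (SimpleGraph.top_adj _ _).mp (Γ.1.adj_sub hadj)
      exact Subtype.ext ((hQ hne).unique ⟨Γ.2.1, hadj⟩ ⟨Γ'.2.1, hadj'⟩)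
    have hC : #↥{Γ : (⊤ : SimpleGraph X).Subgraph | Γ.verts.Subsingleton} ≤ ℵ := by
      have hnoadj : ∀ Γ : (⊤ : SimpleGraph X).Subgraph, Γ.verts.Subsingleton →
          ∀ a b : X, ¬ Γ.Adj a b := by
        intro Γ h a b hab
        exact ((SimpleGraph.top_adj _ _).mp (Γ.adj_sub hab)) (h hab.fst_mem hab.snd_mem)
      set f : ↥{Γ : (⊤ : SimpleGraph X).Subgraph | Γ.verts.Subsingleton} → Option X :=
        fun Γ => if h : Γ.1.verts.Nonempty then some h.choose else none with hf
      have hfi : Function.Injective f := by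
        intro Γ Γ' he
        have hAdj : Γ.1.Adj = Γ'.1.Adj := by
          funext a b
          exact propext ⟨fun h => absurd h (hnoadj _ Γ.2 a b),
            fun h => absurd h (hnoadj _ Γ'.2 a b)⟩
        rw [hf] at he
        simp only at he
        by_cases h1 : Γ.1.verts.Nonempty <;> by_cases h2 : Γ'.1.verts.Nonempty
        · rw [dif_pos h1, dif_pos h2] at he
          have hx := Option.some.inj he
          have e1 : Γ.1.verts = {h1.choose} :=
            Set.eq_singleton_iff_unique_mem.mpr ⟨h1.choose_spec, fun y hy => Γ.2 hy h1.choose_spec⟩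
          have e2 : Γ'.1.verts = {h2.choose} :=
            Set.eq_singleton_iff_unique_mem.mpr ⟨h2.choose_spec, fun y hy => Γ'.2 hy h2.choose_spec⟩
          refine Subtype.ext (SimpleGraph.Subgraph.ext ?_ hAdj)
          rw [e1, e2, hx]
        · rw [dif_pos h1, dif_neg h2] at he; cases he
        · rw [dif_neg h1, dif_pos h2] at he; cases he
        · rw [Set.not_nonempty_iff_eq_empty] at h1 h2
          refine Subtype.ext (SimpleGraph.Subgraph.ext ?_ hAdj)
          rw [h1, h2]
      refine le_trans (Cardinal.mk_le_of_injective hfi) ?_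
      rw [Cardinal.mk_option, hX, Cardinal.add_one_eq hℵ]
    refine le_trans (Cardinal.mk_le_mk_of_subset hsub) ?_
    refine le_trans (Cardinal.mk_union_le _ _) ?_
    refine le_trans (add_le_add (le_trans (Cardinal.mk_union_le _ _)
      (le_trans (add_le_add hE (hcomp.trans hℵ'.le)) (Cardinal.add_eq_self hℵ).le)) hC) ?_
    exact (Cardinal.add_eq_self hℵ).le
  -- a well-order on X of minimal order type
  obtain ⟨r, wo, hr⟩ := Cardinal.ord_eq X
  haveI : IsWellOrder X r := wo
  have hIio : ∀ t : X, #{s : X // r s t} < ℵ := by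
    intro t
    have h1 := Cardinal.card_typein_lt (r := r) t hr
    rwa [Ordinal.card_typein, hX] at h1
  -- a surjective enumeration of all the tasks
  obtain ⟨task, htask⟩ : ∃ task : X → (↥𝒢 ⊕ X × X), Function.Surjective task := by
    have hle : #(↥𝒢 ⊕ X × X) ≤ #X := by
      rw [Cardinal.mk_sum, Cardinal.lift_id, Cardinal.lift_id, hX, hprod]
      exact le_trans (add_le_add h𝒢 le_rfl) (Cardinal.add_eq_self hℵ).le
    obtain ⟨f⟩ := (Cardinal.le_def _ _).mp hle
    haveI : Nonempty (↥𝒢 ⊕ X × X) :=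
      ⟨Sum.inr (Classical.arbitrary X, Classical.arbitrary X)⟩
    exact ⟨Function.invFun f, Function.invFun_surjective f.injective⟩
  -- the transfinite construction
  obtain ⟨F, hF⟩ := aux_rec (r := r) IsWellFounded.wf
    (P := fun t (prior : ∀ s, r s t → Option ((⊤ : SimpleGraph X).Subgraph × X)) out =>
      (∀ G : ↥𝒢, task t = Sum.inl G →
        ((∃ s, ∃ hs : r s t, ∃ γ, prior s hs = some (G.1, γ)) ∧ out = none) ∨
        ((∀ s (hs : r s t) γ, prior s hs ≠ some (G.1, γ)) ∧
          ∃ γ, (∀ s (hs : r s t) Γ, prior s hs ≠ some (Γ, γ)) ∧ out = some (G.1, γ))) ∧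
      (∀ γ x, task t = Sum.inr (γ, x) →
        ((∃ s, ∃ hs : r s t, ∃ Γ, prior s hs = some (Γ, γ) ∧ Γ ∈ 𝒢 ∧ x ∈ Γ.verts) ∧
            out = none) ∨
        (∃ Γ, Γ ∈ 𝒢 ∧ (∀ s (hs : r s t) γ', prior s hs ≠ some (Γ, γ')) ∧ x ∈ Γ.verts ∧
          Disjoint Γ.verts {y | ∃ s, ∃ hs : r s t, ∃ Γ',
            prior s hs = some (Γ', γ) ∧ Γ' ∈ 𝒢 ∧ y ∈ Γ'.verts} ∧
          out = some (Γ, γ)))) (by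
    intro t prior
    beta_reduce
    have hUb : #(Prod.fst '' {p : (⊤ : SimpleGraph X).Subgraph × X |
        ∃ i : {s // r s t}, prior i.1 i.2 = some p}) < ℵ :=
      lt_of_le_of_lt (Cardinal.mk_image_le.trans (aux_mk_some_le _)) (hIio t)
    rcases ht : task t with G | ⟨γ, x⟩
    · by_cases h1 : ∃ s, ∃ hs : r s t, ∃ γ, prior s hs = some (G.1, γ)
      · refine ⟨none, fun G' hG' => ?_, fun γ x hx => by simp at hx⟩
        cases Sum.inl.inj hG'
        exact Or.inl ⟨h1, rfl⟩
      · have hcl : #(Prod.snd '' {p : (⊤ : SimpleGraph X).Subgraph × X |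
            ∃ i : {s // r s t}, prior i.1 i.2 = some p}) < #X := by
          rw [hX]
          exact lt_of_le_of_lt (Cardinal.mk_image_le.trans (aux_mk_some_le _)) (hIio t)
        obtain ⟨γ, hγ⟩ := aux_compl_nonempty hcl
        refine ⟨some (G.1, γ), fun G' hG' => ?_, fun γ' x hx => by simp at hx⟩
        cases Sum.inl.inj hG'
        refine Or.inr ⟨fun s hs γ0 hne => h1 ⟨s, hs, γ0, hne⟩, γ,
          fun s hs Γ hne => hγ ⟨(Γ, γ), ⟨⟨s, hs⟩, hne⟩, rfl⟩, rfl⟩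
    · by_cases h1 : ∃ s, ∃ hs : r s t, ∃ Γ, prior s hs = some (Γ, γ) ∧ Γ ∈ 𝒢 ∧ x ∈ Γ.verts
      · refine ⟨none, fun G' hG' => by simp at hG', fun γ' x' hx' => ?_⟩
        injection Sum.inr.inj hx' with h2 h3
        subst h2; subst h3
        exact Or.inl ⟨h1, rfl⟩
      · have hS : #{y | ∃ s, ∃ hs : r s t, ∃ Γ',
            prior s hs = some (Γ', γ) ∧ Γ' ∈ 𝒢 ∧ y ∈ Γ'.verts} < ℵ := by
          have hsub2 : {y | ∃ s, ∃ hs : r s t, ∃ Γ',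
              prior s hs = some (Γ', γ) ∧ Γ' ∈ 𝒢 ∧ y ∈ Γ'.verts} ⊆
              ⋃ i : {s // r s t}, {y | ∃ Γ',
                prior i.1 i.2 = some (Γ', γ) ∧ Γ' ∈ 𝒢 ∧ y ∈ Γ'.verts} := by
            rintro y ⟨s, hs, Γ', h⟩
            exact Set.mem_iUnion.mpr ⟨⟨s, hs⟩, Γ', h⟩
          refine lt_of_le_of_lt (Cardinal.mk_le_mk_of_subset hsub2) ?_
          refine lt_of_le_of_lt (Cardinal.mk_iUnion_le _)
            (Cardinal.mul_lt_of_lt hℵ (hIio t) (lt_of_le_of_lt (ciSup_le' ?_) hℵ'))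
          intro i
          rcases e : prior i.1 i.2 with - | ⟨Γ₀, γ₀⟩
          · refine le_trans (le_of_eq ?_) (zero_le (a := ℵ'))
            have he : {y : X | ∃ Γ' : (⊤ : SimpleGraph X).Subgraph,
                (none : Option ((⊤ : SimpleGraph X).Subgraph × X)) = some (Γ', γ) ∧
                Γ' ∈ 𝒢 ∧ y ∈ Γ'.verts} = ∅ := by
              ext y
              simp
            rw [he]
            simp
          · by_cases h𝒢₀ : Γ₀ ∈ 𝒢
            · refine le_trans (Cardinal.mk_le_mk_of_subset ?_) (hsmall Γ₀ h𝒢₀)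
              rintro y ⟨Γ', hp, -, hy⟩
              obtain ⟨h2, -⟩ := aux_pair_eq hp
              rw [h2]
              exact hy
            · refine le_trans (le_of_eq ?_) (zero_le (a := ℵ'))
              have he : {y : X | ∃ Γ' : (⊤ : SimpleGraph X).Subgraph,
                  some (Γ₀, γ₀) = some (Γ', γ) ∧ Γ' ∈ 𝒢 ∧ y ∈ Γ'.verts} = ∅ := by
                ext y
                simp only [Set.mem_setOf_eq, Set.mem_empty_iff_false, iff_false, not_exists]
                rintro Γ' ⟨hp, h𝒢', -⟩
                obtain ⟨h2, -⟩ := aux_pair_eq hp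
                exact h𝒢₀ (h2 ▸ h𝒢')
              rw [he]
              simp
        have hxS : x ∉ {y | ∃ s, ∃ hs : r s t, ∃ Γ',
            prior s hs = some (Γ', γ) ∧ Γ' ∈ 𝒢 ∧ y ∈ Γ'.verts} := h1
        obtain ⟨Γ, hΓ𝒢, hΓU, hxΓ, hdisj⟩ := hext _ _ x hS hUb hxS
        refine ⟨some (Γ, γ), fun G' hG' => by simp at hG',
          fun γ' x' hx' => ?_⟩
        injection Sum.inr.inj hx' with h2 h3
        subst h2; subst h3
        exact Or.inr ⟨Γ, hΓ𝒢, fun s hs γ0 hne => hΓU ⟨(Γ, γ0), ⟨⟨s, hs⟩, hne⟩, rfl⟩,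
          hxΓ, hdisj, rfl⟩)
  -- basic properties of the construction
  have c0 : ∀ t Γ γ, F t = some (Γ, γ) → Γ ∈ 𝒢 := by
    intro t Γ γ h
    obtain ⟨hF1, hF2⟩ := hF t
    rcases ht : task t with G | ⟨γ', x⟩
    · rcases hF1 G ht with ⟨-, h0⟩ | ⟨-, γ0, -, h0⟩
      · rw [h0] at h; cases h
      · rw [h0] at h
        exact (aux_pair_eq h).1 ▸ G.2
    · rcases hF2 γ' x ht with ⟨-, h0⟩ | ⟨Γ0, hΓ0, -, -, -, h0⟩
      · rw [h0] at h; cases h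
      · rw [h0] at h
        exact (aux_pair_eq h).1 ▸ hΓ0
  have c1 : ∀ t t' Γ γ γ', r t t' → F t = some (Γ, γ) → F t' = some (Γ, γ') → False := by
    intro t t' Γ γ γ' hr' h h'
    obtain ⟨hF1, hF2⟩ := hF t'
    rcases ht : task t' with G | ⟨γ0, x⟩
    · rcases hF1 G ht with ⟨-, h0⟩ | ⟨hnot, γA, -, h0⟩
      · rw [h0] at h'; cases h'
      · have hG : G.1 = Γ := (aux_pair_eq (h0.symm.trans h')).1
        exact hnot t hr' γ (by rw [hG]; exact h)
    · rcases hF2 γ0 x ht with ⟨-, h0⟩ | ⟨Γ0, -, hnot, -, -, h0⟩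
      · rw [h0] at h'; cases h'
      · have hG : Γ0 = Γ := (aux_pair_eq (h0.symm.trans h')).1
        exact hnot t hr' γ (by rw [hG]; exact h)
  have c1' : ∀ t t' Γ γ γ', F t = some (Γ, γ) → F t' = some (Γ, γ') → γ = γ' := by
    intro t t' Γ γ γ' h h'
    rcases trichotomous_of r t t' with h3 | h3 | h3
    · exact absurd (c1 t t' Γ γ γ' h3 h h') not_false
    · subst h3
      exact (aux_pair_eq (h.symm.trans h')).2
    · exact absurd (c1 t' t Γ γ' γ h3 h' h) not_false
  have key : ∀ t t' Γ Γ' γ, r t t' → F t = some (Γ, γ) → F t' = some (Γ', γ) →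
      Disjoint Γ'.verts Γ.verts := by
    intro t t' Γ Γ' γ hr' h h'
    obtain ⟨hF1, hF2⟩ := hF t'
    rcases ht : task t' with G | ⟨γ1, x⟩
    · rcases hF1 G ht with ⟨-, h0⟩ | ⟨-, γ0, hfresh, h0⟩
      · rw [h0] at h'; cases h'
      · have hγ : γ0 = γ := (aux_pair_eq (h0.symm.trans h')).2
        exact absurd (hγ ▸ h) (hfresh t hr' Γ)
    · rcases hF2 γ1 x ht with ⟨-, h0⟩ | ⟨Γ0, -, -, -, hdisj, h0⟩
      · rw [h0] at h'; cases h'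
      · have hΓ0 : Γ0 = Γ' := (aux_pair_eq (h0.symm.trans h')).1
        have hγ1 : γ1 = γ := (aux_pair_eq (h0.symm.trans h')).2
        subst hΓ0
        subst hγ1
        refine hdisj.mono_right ?_
        intro y hy
        exact ⟨t, hr', Γ, h, c0 t Γ γ1 h, hy⟩
  have c3 : ∀ t t' Γ Γ' γ, F t = some (Γ, γ) → F t' = some (Γ', γ) → Γ ≠ Γ' →
      Disjoint Γ.verts Γ'.verts := by
    intro t t' Γ Γ' γ h h' hne
    rcases trichotomous_of r t t' with h3 | h3 | h3
    · exact (key t t' Γ Γ' γ h3 h h').symm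
    · subst h3
      exact absurd (aux_pair_eq (h.symm.trans h')).1 hne
    · exact key t' t Γ' Γ γ h3 h' h
  have c4 : ∀ γ x, ∃ t Γ, F t = some (Γ, γ) ∧ x ∈ Γ.verts := by
    intro γ x
    obtain ⟨t, ht⟩ := htask (Sum.inr (γ, x))
    obtain ⟨-, hF2⟩ := hF t
    rcases hF2 γ x ht with ⟨⟨s, hs, Γ, hp, -, hx⟩, -⟩ | ⟨Γ, -, -, hx, -, h0⟩
    · exact ⟨s, Γ, hp, hx⟩
    · exact ⟨t, Γ, h0, hx⟩
  have c2 : ∀ Γ, Γ ∈ 𝒢 → ∃ t γ, F t = some (Γ, γ) := by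
    intro Γ hΓ
    obtain ⟨t, ht⟩ := htask (Sum.inl ⟨Γ, hΓ⟩)
    obtain ⟨hF1, -⟩ := hF t
    rcases hF1 ⟨Γ, hΓ⟩ ht with ⟨⟨s, hs, γ, hp⟩, -⟩ | ⟨-, γ, -, h0⟩
    · exact ⟨s, γ, hp⟩
    · exact ⟨t, γ, h0⟩
  -- assembly
  refine ⟨{C | ∃ γ : X, C = {Γ | ∃ t, F t = some (Γ, γ)}}, ?_, ?_, ?_⟩
  · ext Γ
    constructor
    · rintro ⟨C, ⟨γ, rfl⟩, t, hT⟩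
      exact c0 t Γ γ hT
    · intro hΓ
      obtain ⟨t, γ, h⟩ := c2 Γ hΓ
      exact ⟨{Γ' | ∃ t, F t = some (Γ', γ)}, ⟨γ, rfl⟩, t, h⟩
  · rintro C ⟨γ, rfl⟩ C' ⟨γ', rfl⟩ hne
    simp only [Function.onFun, id]
    rw [Set.disjoint_left]
    rintro Γ ⟨t, h⟩ ⟨t', h'⟩
    exact hne (by rw [c1' t t' Γ γ γ' h h'])
  · rintro C ⟨γ, rfl⟩
    constructor
    · rintro Γ ⟨t, h⟩ Γ' ⟨t', h'⟩ hne
      exact c3 t t' Γ Γ' γ h h' hne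
    · intro x
      obtain ⟨t, Γ, h, hx⟩ := c4 γ x
      exact ⟨Γ, ⟨t, h⟩, hx⟩
end
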